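/- arXiv:2605.10200 — 5 statements merged into one kernel-verified Lean document; each statement's English description precedes it below -/
import Mathlib

section
/- Let ε > 0, K a positive integer, y ∈ [K], and let v_1, …, v_K be vectors in a real inner product space. Let S be drawn from the subset randomizer P_y, and define ĝ = (2(e^ε + 1)/(e^ε − 1)) · Σ_{k ∈ [K]} (1{k ∈ S} − 1/(e^ε + 1)) · v_k. Then E[ĝ] = v_y. -/
open Finset

/-- The subset randomizer: each `i ∈ [K]` is included in the output set independently with
probability `1/2` if `i = y` and probability `1/(e^ε + 1)` otherwise. `subsetProb ε y S` is the
probability that the output is exactly `S`. -/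
noncomputable def subsetProb (ε : ℝ) {K : ℕ} (y : Fin K) (S : Finset (Fin K)) : ℝ :=
  (∏ i ∈ S, if i = y then (1 : ℝ) / 2 else 1 / (Real.exp ε + 1)) *
    ∏ i ∈ Sᶜ, (1 - if i = y then (1 : ℝ) / 2 else 1 / (Real.exp ε + 1))

lemma sum_prod_compl {K : ℕ} (f g : Fin K → ℝ) :
    ∑ S : Finset (Fin K), (∏ i ∈ S, f i) * ∏ i ∈ Sᶜ, g i = ∏ i, (f i + g i) := by
  rw [Finset.prod_add, ← Finset.powerset_univ]
  refine Finset.sum_congr rfl fun S _ => ?_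
  rw [Finset.compl_eq_univ_sdiff]

theorem stmt_1 {V : Type*} [NormedAddCommGroup V] [InnerProductSpace ℝ V]
    (ε : ℝ) (hε : 0 < ε) (K : ℕ) (hK : 0 < K) (y : Fin K) (v : Fin K → V) :
    (∑ S : Finset (Fin K), subsetProb ε y S •
        ((2 * (Real.exp ε + 1) / (Real.exp ε - 1)) •
          ∑ k : Fin K, ((if k ∈ S then (1 : ℝ) else 0) - 1 / (Real.exp ε + 1)) • v k))
      = v y := by
  set e := Real.exp ε with he
  have h1 : 1 < e := by
    rw [he]
    nlinarith [Real.add_one_le_exp ε]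
  have hep : (0:ℝ) < e + 1 := by linarith
  have hem : (0:ℝ) < e - 1 := by linarith
  set c : ℝ := 2 * (e + 1) / (e - 1) with hc
  set p : Fin K → ℝ := fun i => if i = y then (1:ℝ)/2 else 1/(e+1) with hp
  -- total probability is 1
  have hsum1 : ∑ S : Finset (Fin K), subsetProb ε y S = 1 := by
    have := sum_prod_compl (K := K) p (fun i => 1 - p i)
    simp only [add_sub_cancel, Finset.prod_const_one] at this
    simpa [subsetProb, hp] using this
  -- marginal probability of k ∈ S
  have hsum2 : ∀ k : Fin K,
      ∑ S : Finset (Fin K), subsetProb ε y S * (if k ∈ S then (1:ℝ) else 0) = p k := by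
    intro k
    have key : ∀ S : Finset (Fin K),
        subsetProb ε y S * (if k ∈ S then (1:ℝ) else 0)
          = (∏ i ∈ S, p i) * ∏ i ∈ Sᶜ, (if i = k then 0 else 1 - p i) := by
      intro S
      by_cases hk : k ∈ S
      · have hkc : k ∉ Sᶜ := by simp [hk]
        simp only [hk, if_pos, mul_one]
        rw [subsetProb]
        congr 1
        refine Finset.prod_congr rfl fun i hi => ?_
        have : i ≠ k := fun h => hkc (h ▸ hi)
        simp [this, hp, he]
      · have hkc : k ∈ Sᶜ := by simp [hk]
        simp only [hk, if_neg, mul_zero, not_false_iff]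
        rw [eq_comm, Finset.prod_eq_zero hkc]
        · ring
        · simp
    rw [Finset.sum_congr rfl fun S _ => key S, sum_prod_compl]
    have : ∀ i : Fin K, p i + (if i = k then 0 else 1 - p i) = if i = k then p k else 1 := by
      intro i
      by_cases h : i = k <;> simp [h]
    rw [Finset.prod_congr rfl fun i _ => this i, Finset.prod_ite_eq']
    simp
  -- rearrange the double sum
  have hrw : ∀ S : Finset (Fin K), subsetProb ε y S •
        (c • ∑ k : Fin K, ((if k ∈ S then (1:ℝ) else 0) - 1/(e+1)) • v k)
      = ∑ k : Fin K,
          (subsetProb ε y S * (c * ((if k ∈ S then (1:ℝ) else 0) - 1/(e+1)))) • v k := by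
    intro S
    rw [Finset.smul_sum, Finset.smul_sum]
    refine Finset.sum_congr rfl fun k _ => ?_
    rw [smul_smul, smul_smul, mul_assoc]
  calc (∑ S : Finset (Fin K), subsetProb ε y S •
        (c • ∑ k : Fin K, ((if k ∈ S then (1:ℝ) else 0) - 1/(e+1)) • v k))
      = ∑ S : Finset (Fin K), ∑ k : Fin K,
          (subsetProb ε y S * (c * ((if k ∈ S then (1:ℝ) else 0) - 1/(e+1)))) • v k := by
        exact Finset.sum_congr rfl fun S _ => hrw S
    _ = ∑ k : Fin K, (∑ S : Finset (Fin K),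
          subsetProb ε y S * (c * ((if k ∈ S then (1:ℝ) else 0) - 1/(e+1)))) • v k := by
        rw [Finset.sum_comm]
        exact Finset.sum_congr rfl fun k _ => (Finset.sum_smul).symm
    _ = ∑ k : Fin K, (c * (p k - 1/(e+1))) • v k := by
        refine Finset.sum_congr rfl fun k _ => ?_
        congr 1
        have : ∀ S : Finset (Fin K),
            subsetProb ε y S * (c * ((if k ∈ S then (1:ℝ) else 0) - 1/(e+1)))
            = c * (subsetProb ε y S * (if k ∈ S then (1:ℝ) else 0))
              - (c * (1/(e+1))) * subsetProb ε y S := by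
          intro S; ring
        rw [Finset.sum_congr rfl fun S _ => this S, Finset.sum_sub_distrib,
          ← Finset.mul_sum, ← Finset.mul_sum, hsum2 k, hsum1]
        ring
    _ = v y := by
        rw [Finset.sum_eq_single y]
        · have hpy : p y = 1/2 := by simp [hp]
          have : c * (p y - 1/(e+1)) = 1 := by
            rw [hpy, hc]
            field_simp
            ring
          rw [this, one_smul]
        · intro k _ hk
          have : p k = 1/(e+1) := by simp [hp, hk]
          simp [this]
        · intro h; exact absurd (Finset.mem_univ y) h
end

section
/- Let ε > 0, let K ≥ 2 be an integer, let 1 ≤ d ≤ K − 1, and fix y ∈ [K]. Let S be a random d-element subset of [K] with Pr[S = A] = e^ε / D if y ∈ A and Pr[S = A] = 1 / D if y ∉ A, where D = e^ε·C(K−1, d−1) + C(K−1, d). Then this defines a probability distribution on d-element subsets, Pr[y ∈ S] = γ_d where γ_d = d e^ε/(d e^ε + K − d), and Pr[i ∈ S] = ζ_d := (d − γ_d)/(K − 1) for every i ≠ y. -/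
open Finset

lemma count_subsets {α : Type*} [DecidableEq α] (t s : Finset α) (hst : s ⊆ t) (d : ℕ)
    (hs : s.card ≤ d) :
    ((t.powersetCard d).filter (fun A => s ⊆ A)).card
      = (t.card - s.card).choose (d - s.card) := by
  have h2 : (t.card - s.card).choose (d - s.card)
      = ((t \ s).powersetCard (d - s.card)).card := by
    rw [card_powersetCard, card_sdiff_of_subset hst]
  rw [h2]
  refine card_bij' (fun A _ => A \ s) (fun B _ => B ∪ s) ?_ ?_ ?_ ?_
  · intro A hA
    simp only [mem_filter, mem_powersetCard] at hA ⊢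
    exact ⟨sdiff_subset_sdiff hA.1.1 Subset.rfl, by rw [card_sdiff_of_subset hA.2, hA.1.2]⟩
  · intro B hB
    simp only [mem_filter, mem_powersetCard] at hB ⊢
    obtain ⟨hBt, hBd⟩ := subset_sdiff.mp hB.1
    refine ⟨⟨union_subset hBt hst, ?_⟩, subset_union_right⟩
    rw [card_union_of_disjoint hBd, hB.2, Nat.sub_add_cancel hs]
  · intro A hA
    simp only [mem_filter] at hA
    exact sdiff_union_of_subset hA.2
  · intro B hB
    simp only [mem_powersetCard] at hB
    exact union_sdiff_cancel_right (subset_sdiff.mp hB.1).2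

/-- The `d`-subset selection randomizer with privacy parameter `ε` and true label `y`:
a `d`-element subset `A ⊆ [K]` gets probability `e^ε / D` if `y ∈ A` and `1 / D` otherwise,
where `D = e^ε · C(K-1, d-1) + C(K-1, d)`. -/
noncomputable def dSubsetProb (ε : ℝ) (K d : ℕ) (y : Fin K) (A : Finset (Fin K)) : ℝ :=
  if A.card = d then
    (if y ∈ A then Real.exp ε else 1) /
      (Real.exp ε * (K - 1).choose (d - 1) + (K - 1).choose d)
  else 0

/-- `γ_d = d e^ε / (d e^ε + K - d)`, the probability that the true label is in the output. -/
noncomputable def gammaD (ε : ℝ) (K d : ℕ) : ℝ :=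
  d * Real.exp ε / (d * Real.exp ε + K - d)

/-- `ζ_d = (d - γ_d)/(K - 1)`, the probability that any fixed other label is in the output. -/
noncomputable def zetaD (ε : ℝ) (K d : ℕ) : ℝ :=
  (d - gammaD ε K d) / (K - 1)

theorem stmt_9 (ε : ℝ) (hε : 0 < ε) (K : ℕ) (hK : 2 ≤ K) (d : ℕ)
    (hd1 : 1 ≤ d) (hd2 : d ≤ K - 1) (y : Fin K) :
    (∀ A : Finset (Fin K), 0 ≤ dSubsetProb ε K d y A) ∧
    (∀ A : Finset (Fin K), A.card ≠ d → dSubsetProb ε K d y A = 0) ∧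
    (∑ A : Finset (Fin K), dSubsetProb ε K d y A = 1) ∧
    (∑ A : Finset (Fin K), (if y ∈ A then dSubsetProb ε K d y A else 0))
      = gammaD ε K d ∧
    (∀ i : Fin K, i ≠ y →
      (∑ A : Finset (Fin K), (if i ∈ A then dSubsetProb ε K d y A else 0))
        = zetaD ε K d) := by
  have hdK : d ≤ K := le_trans hd2 (Nat.sub_le K 1)
  have hdK' : d < K := by omega
  set E : ℝ := Real.exp ε with hE_def
  have hE : 0 < E := Real.exp_pos ε
  set c1 : ℝ := ((K - 1).choose (d - 1) : ℝ) with hc1_def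
  set c2 : ℝ := ((K - 1).choose d : ℝ) with hc2_def
  have hc1pos : (0:ℝ) < c1 := by
    rw [hc1_def]; exact_mod_cast Nat.choose_pos (by omega : d - 1 ≤ K - 1)
  have hc2pos : (0:ℝ) < c2 := by
    rw [hc2_def]; exact_mod_cast Nat.choose_pos hd2
  set D : ℝ := E * c1 + c2 with hD_def
  have hD : 0 < D := by positivity
  have hKR : (1:ℝ) < (K:ℝ) := by exact_mod_cast by omega
  have hdR : (d:ℝ) < (K:ℝ) := by exact_mod_cast hdK'
  have hd1R : (1:ℝ) ≤ (d:ℝ) := by exact_mod_cast hd1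
  have hden : (0:ℝ) < (d:ℝ) * E + (K:ℝ) - (d:ℝ) := by nlinarith
  -- the key binomial identities (cast to ℝ)
  have hI1 : c2 * (d:ℝ) = c1 * ((K:ℝ) - (d:ℝ)) := by
    have h := Nat.choose_succ_right_eq (K - 1) (d - 1)
    rw [show d - 1 + 1 = d from by omega, show (K - 1) - (d - 1) = K - d from by omega] at h
    have h' := congrArg (Nat.cast : ℕ → ℝ) h
    push_cast [Nat.cast_sub hdK] at h'
    exact h'
  -- reduce sums over all finsets to sums over `powersetCard d univ`
  have hsum : ∀ f : Finset (Fin K) → ℝ,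
      (∑ A : Finset (Fin K), if A.card = d then f A else 0)
        = ∑ A ∈ (univ : Finset (Fin K)).powersetCard d, f A := by
    intro f
    rw [← sum_filter]
    congr 1
    ext A; simp [mem_powersetCard]
  -- cardinality computations
  have hN1 : (((univ : Finset (Fin K)).powersetCard d).filter (fun A => y ∈ A)).card
      = (K - 1).choose (d - 1) := by
    have h := count_subsets (univ : Finset (Fin K)) {y} (subset_univ _) d (by simpa using hd1)
    simpa [singleton_subset_iff, card_univ] using h
  have hN0 : (((univ : Finset (Fin K)).powersetCard d).filter (fun A => y ∉ A)).card
      = (K - 1).choose d := by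
    have he : ((univ : Finset (Fin K)).powersetCard d).filter (fun A => y ∉ A)
        = ((univ : Finset (Fin K)).erase y).powersetCard d := by
      ext A
      simp only [mem_filter, mem_powersetCard, subset_erase, subset_univ, true_and]
      tauto
    rw [he, card_powersetCard, card_erase_of_mem (mem_univ y), card_univ, Fintype.card_fin]
  refine ⟨?_, ?_, ?_, ?_, ?_⟩
  · -- nonnegativity
    intro A
    unfold dSubsetProb
    split_ifs <;> positivity
  · -- vanishing off cardinality d
    intro A hA
    simp [dSubsetProb, hA]
  · -- total mass one
    have h1 : (∑ A : Finset (Fin K), dSubsetProb ε K d y A)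
        = ∑ A ∈ (univ : Finset (Fin K)).powersetCard d, (if y ∈ A then E else 1) / D := by
      rw [← hsum]
      rfl
    rw [h1, ← sum_div, sum_ite, sum_const, sum_const, hN1, hN0, nsmul_eq_mul, nsmul_eq_mul,
      mul_one]
    rw [← hc1_def, ← hc2_def, div_eq_one_iff_eq hD.ne', hD_def]
    ring
  · -- probability of containing y
    have h1 : (∑ A : Finset (Fin K), (if y ∈ A then dSubsetProb ε K d y A else 0))
        = ∑ A ∈ (univ : Finset (Fin K)).powersetCard d, (if y ∈ A then E / D else 0) := by
      rw [← hsum]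
      congr 1; ext A
      by_cases h1 : y ∈ A <;> by_cases h2 : A.card = d <;> simp [dSubsetProb, h1, h2, hE_def, hD_def, hc1_def, hc2_def]
    rw [h1, ← sum_filter, sum_const, hN1, nsmul_eq_mul, ← hc1_def]
    unfold gammaD
    rw [← hE_def, ← mul_div_assoc, div_eq_div_iff hD.ne' hden.ne']
    linear_combination (-E) * hI1
  · -- probability of containing i ≠ y
    intro i hiy
    have hi2 : ({i, y} : Finset (Fin K)).card = 2 := by
      rw [card_insert_of_notMem (by simpa using hiy), card_singleton]
    -- the two counts
    have hN10 : (((univ : Finset (Fin K)).powersetCard d).filter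
        (fun A => i ∈ A ∧ y ∉ A)).card = (K - 2).choose (d - 1) := by
      have he : ((univ : Finset (Fin K)).powersetCard d).filter (fun A => i ∈ A ∧ y ∉ A)
          = (((univ : Finset (Fin K)).erase y).powersetCard d).filter
              (fun A => ({i} : Finset (Fin K)) ⊆ A) := by
        ext A
        simp only [mem_filter, mem_powersetCard, subset_erase, subset_univ, true_and,
          singleton_subset_iff]
        tauto
      rw [he, count_subsets _ _ (by simp [hiy]) d (by simpa using hd1),
        card_erase_of_mem (mem_univ y), card_univ, Fintype.card_fin, card_singleton]
      congr 1 <;> omega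
    have hN11 : ((((univ : Finset (Fin K)).powersetCard d).filter
        (fun A => i ∈ A ∧ y ∈ A)).card : ℝ) * ((K:ℝ) - 1) = ((d:ℝ) - 1) * c1 := by
      have he : ((univ : Finset (Fin K)).powersetCard d).filter (fun A => i ∈ A ∧ y ∈ A)
          = ((univ : Finset (Fin K)).powersetCard d).filter
              (fun A => ({i, y} : Finset (Fin K)) ⊆ A) := by
        ext A
        simp [insert_subset_iff]
      rcases Nat.lt_or_ge d 2 with hd | hd
      · -- d = 1 : the set is empty
        have hdd : d = 1 := by omega
        have hemp : ((univ : Finset (Fin K)).powersetCard d).filter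
            (fun A => i ∈ A ∧ y ∈ A) = ∅ := by
          rw [he]
          refine eq_empty_of_forall_notMem fun A hA => ?_
          rw [mem_filter, mem_powersetCard] at hA
          have := card_le_card hA.2
          omega
        rw [hemp]
        simp [hdd, hc1_def]
      · -- d ≥ 2
        rw [he, count_subsets _ _ (subset_univ _) d (by omega : ({i,y} : Finset (Fin K)).card ≤ d),
          hi2, card_univ, Fintype.card_fin]
        have h := Nat.add_one_mul_choose_eq (K - 2) (d - 2)
        rw [show K - 2 + 1 = K - 1 from by omega, show d - 2 + 1 = d - 1 from by omega] at h
        have h' := congrArg (Nat.cast : ℕ → ℝ) h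
        push_cast [Nat.cast_sub (by omega : 1 ≤ K), Nat.cast_sub (by omega : 1 ≤ d)] at h'
        rw [mul_comm] at h'
        rw [h', hc1_def]
        ring
    have hN10' : (((K - 2).choose (d - 1) : ℝ)) * ((K:ℝ) - 1) = (d:ℝ) * c2 := by
      have h := Nat.add_one_mul_choose_eq (K - 2) (d - 1)
      rw [show K - 2 + 1 = K - 1 from by omega, show d - 1 + 1 = d from by omega] at h
      have h' := congrArg (Nat.cast : ℕ → ℝ) h
      push_cast [Nat.cast_sub (by omega : 1 ≤ K)] at h'
      rw [mul_comm] at h'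
      rw [h', hc2_def]
      ring
    -- rewrite the sum
    have h1 : (∑ A : Finset (Fin K), (if i ∈ A then dSubsetProb ε K d y A else 0))
        = ∑ A ∈ (univ : Finset (Fin K)).powersetCard d,
            (if i ∈ A then (if y ∈ A then E else 1) / D else 0) := by
      rw [← hsum]
      congr 1; ext A
      by_cases h1 : i ∈ A <;> by_cases h2 : A.card = d <;> simp [dSubsetProb, h1, h2, hE_def, hD_def, hc1_def, hc2_def]
    rw [h1, ← sum_filter]
    have h2 : ∑ A ∈ ((univ : Finset (Fin K)).powersetCard d).filter (fun A => i ∈ A),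
        (if y ∈ A then E else 1) / D
        = ((((univ : Finset (Fin K)).powersetCard d).filter
              (fun A => i ∈ A ∧ y ∈ A)).card * E
          + (((univ : Finset (Fin K)).powersetCard d).filter
              (fun A => i ∈ A ∧ y ∉ A)).card) / D := by
      rw [← sum_div, sum_ite, sum_const, sum_const, filter_filter, filter_filter,
        nsmul_eq_mul, nsmul_eq_mul, mul_one]
    rw [h2, hN10]
    have hzeta : zetaD ε K d
        = ((d:ℝ) * (((d:ℝ) - 1) * E + ((K:ℝ) - (d:ℝ))))
            / (((K:ℝ) - 1) * ((d:ℝ) * E + (K:ℝ) - (d:ℝ))) := by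
      have hK1 : ((K:ℝ) - 1) ≠ 0 := by linarith
      unfold zetaD gammaD
      rw [← hE_def]
      field_simp
      ring
    rw [hzeta, div_eq_div_iff hD.ne' (by nlinarith : (0:ℝ) < ((K:ℝ) - 1) * ((d:ℝ) * E + (K:ℝ) - (d:ℝ))).ne']
    set n11 : ℝ := ((((univ : Finset (Fin K)).powersetCard d).filter
        (fun A => i ∈ A ∧ y ∈ A)).card : ℝ)
    linear_combination (E * ((d:ℝ) * E + (K:ℝ) - (d:ℝ))) * hN11
      + (((d:ℝ) * E + (K:ℝ) - (d:ℝ))) * hN10' + E * hI1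
end

section
/- Let ε > 0, K ≥ 3 an integer, 1 ≤ d ≤ K − 1, y ∈ [K], and let S be drawn from the d-subset selection distribution with true label y. Let ζ_d = (d − γ_d)/(K − 1) where γ_d = d e^ε/(d e^ε + K − d). Then for any two distinct indices k, k' ∈ [K] \ {y}, the quantity θ := Pr[k ∈ S and k' ∈ S] − ζ_d² satisfies −ζ_d² ≤ θ ≤ 0. In particular θ does not depend on the choice of the pair k, k'. -/
open Finset

lemma card_filter_superset' {α : Type*} [DecidableEq α] (t s : Finset α) (hst : s ⊆ t)
    (d : ℕ) (hsd : s.card ≤ d) :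
    ((t.powersetCard d).filter (fun A => s ⊆ A)).card
      = (t.card - s.card).choose (d - s.card) := by
  rw [← Finset.card_sdiff_of_subset hst, ← Finset.card_powersetCard]
  apply Finset.card_nbij' (fun A => A \ s) (fun B => B ∪ s)
  · intro A hA
    simp only [mem_coe, mem_filter, mem_powersetCard] at hA
    obtain ⟨⟨hAt, hAcard⟩, hsA⟩ := hA
    rw [mem_coe, mem_powersetCard]
    exact ⟨sdiff_subset_sdiff hAt (le_refl s), by rw [card_sdiff_of_subset hsA, hAcard]⟩
  · intro B hB
    rw [mem_coe, mem_powersetCard] at hB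
    obtain ⟨hBts, hBcard⟩ := hB
    have hdisj : Disjoint B s := (sdiff_disjoint.mono_left hBts)
    simp only [mem_coe, mem_filter, mem_powersetCard]
    refine ⟨⟨union_subset (hBts.trans (sdiff_subset)) hst, ?_⟩, subset_union_right⟩
    rw [card_union_of_disjoint hdisj, hBcard]
    omega
  · intro A hA
    simp only [mem_coe, mem_filter, mem_powersetCard] at hA
    exact sdiff_union_of_subset hA.2
  · intro B hB
    rw [mem_coe, mem_powersetCard] at hB
    exact union_sdiff_cancel_right (sdiff_disjoint.mono_left hB.1)

lemma sum_eq_d (ε : ℝ) (K d : ℕ) (y k k' : Fin K) (hk : k ≠ y) (hk' : k' ≠ y)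
    (hkk' : k ≠ k') :
    ∑ A : Finset (Fin K), (if k ∈ A ∧ k' ∈ A then dSubsetProb ε K d y A else 0)
      = (Real.exp ε * (if 3 ≤ d then ((K-3).choose (d-3) : ℝ) else 0)
          + (if 2 ≤ d then ((K-3).choose (d-2) : ℝ) else 0))
        / (Real.exp ε * (K - 1).choose (d - 1) + (K - 1).choose d) := by
  set D : ℝ := Real.exp ε * (K - 1).choose (d - 1) + (K - 1).choose d with hD
  have split : ∀ A : Finset (Fin K),
      (if k ∈ A ∧ k' ∈ A then dSubsetProb ε K d y A else 0)
        = (if A.card = d ∧ y ∈ A ∧ k ∈ A ∧ k' ∈ A then Real.exp ε / D else 0)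
          + (if A.card = d ∧ y ∉ A ∧ k ∈ A ∧ k' ∈ A then 1 / D else 0) := by
    intro A
    by_cases h1 : A.card = d <;> by_cases h2 : y ∈ A <;>
      by_cases h3 : k ∈ A ∧ k' ∈ A <;>
      simp [dSubsetProb, h1, h2, h3, hD]
  rw [Finset.sum_congr rfl (fun A _ => split A), Finset.sum_add_distrib,
    ← Finset.sum_filter, ← Finset.sum_filter, Finset.sum_const, Finset.sum_const,
    nsmul_eq_mul, nsmul_eq_mul]
  have hyk : y ∉ ({k, k'} : Finset (Fin K)) := by
    simp [hk.symm, hk'.symm, Ne.symm hk, Ne.symm hk']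
  have hcard3 : ({y, k, k'} : Finset (Fin K)).card = 3 := by
    rw [card_insert_of_notMem hyk, card_insert_of_notMem (by simp [hkk']),
      card_singleton]
  have hcard2 : ({k, k'} : Finset (Fin K)).card = 2 := by
    rw [card_insert_of_notMem (by simp [hkk']), card_singleton]
  have hC1 : (Finset.univ.filter
      (fun A : Finset (Fin K) => A.card = d ∧ y ∈ A ∧ k ∈ A ∧ k' ∈ A)).card
      = (if 3 ≤ d then (K-3).choose (d-3) else 0) := by
    have hset : (Finset.univ.filter
        (fun A : Finset (Fin K) => A.card = d ∧ y ∈ A ∧ k ∈ A ∧ k' ∈ A))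
        = ((Finset.univ.powersetCard d).filter
            (fun A => ({y, k, k'} : Finset (Fin K)) ⊆ A)) := by
      ext A
      simp [mem_powersetCard, insert_subset_iff]
    rw [hset]
    by_cases h3d : 3 ≤ d
    · rw [if_pos h3d, card_filter_superset' _ _ (subset_univ _) d (by omega)]
      rw [hcard3, card_univ, Fintype.card_fin]
    · rw [if_neg h3d, Finset.card_eq_zero]
      rw [Finset.eq_empty_iff_forall_notMem]
      intro A hA
      simp only [mem_filter, mem_powersetCard] at hA
      have := Finset.card_le_card hA.2
      omega
  have hC0 : (Finset.univ.filter
      (fun A : Finset (Fin K) => A.card = d ∧ y ∉ A ∧ k ∈ A ∧ k' ∈ A)).card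
      = (if 2 ≤ d then (K-3).choose (d-2) else 0) := by
    have hset : (Finset.univ.filter
        (fun A : Finset (Fin K) => A.card = d ∧ y ∉ A ∧ k ∈ A ∧ k' ∈ A))
        = (((Finset.univ.erase y).powersetCard d).filter
            (fun A => ({k, k'} : Finset (Fin K)) ⊆ A)) := by
      ext A
      simp [mem_powersetCard, insert_subset_iff, Finset.subset_erase]
      tauto
    rw [hset]
    by_cases h2d : 2 ≤ d
    · rw [if_pos h2d, card_filter_superset' _ _ ?_ d (by omega)]
      · rw [hcard2, card_erase_of_mem (mem_univ y), card_univ, Fintype.card_fin]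
        congr 1
      · intro x hx
        simp only [mem_insert, mem_singleton] at hx
        rcases hx with rfl | rfl <;> simp [hk, hk', Finset.mem_erase]
    · rw [if_neg h2d, Finset.card_eq_zero]
      rw [Finset.eq_empty_iff_forall_notMem]
      intro A hA
      simp only [mem_filter, mem_powersetCard] at hA
      have := Finset.card_le_card hA.2
      omega
  rw [hC1, hC0]
  by_cases h3d : 3 ≤ d <;> by_cases h2d : 2 ≤ d <;>
    simp [h3d, h2d] <;> ring

lemma closed_eq_d (ε : ℝ) (K d : ℕ) (hK : 3 ≤ K) (hd1 : 1 ≤ d) (hd2 : d ≤ K - 1) :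
    (Real.exp ε * (if 3 ≤ d then ((K-3).choose (d-3) : ℝ) else 0)
          + (if 2 ≤ d then ((K-3).choose (d-2) : ℝ) else 0))
        / (Real.exp ε * (K - 1).choose (d - 1) + (K - 1).choose d)
      = (d : ℝ) * ((d : ℝ) - 1) * (Real.exp ε * ((d : ℝ) - 2) + (K : ℝ) - (d : ℝ))
        / (((K : ℝ) - 1) * ((K : ℝ) - 2) * ((d : ℝ) * Real.exp ε + (K : ℝ) - (d : ℝ))) := by
  have ha : 0 < Real.exp ε := Real.exp_pos ε
  set a : ℝ := Real.exp ε with haa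
  obtain ⟨m, rfl⟩ : ∃ m, K = m + 3 := ⟨K - 3, by omega⟩
  rcases Nat.lt_or_ge d 3 with h3 | h3
  · interval_cases d
    · norm_num
    · -- d = 2
      have hc2 : ((m+2).choose 2 : ℝ) * 2 = ((m:ℝ)+2) * ((m:ℝ)+1) := by
        have h := Nat.choose_succ_right_eq (m+2) 1
        rw [Nat.choose_one_right, show m+2-1 = m+1 from rfl] at h
        exact_mod_cast h
      simp only [show ¬ (3 ≤ 2) by omega, if_neg, if_pos, show (2:ℕ) ≤ 2 from le_refl 2,
        show m+3-1 = m+2 from rfl, show m+3-3 = m from rfl, show (2:ℕ)-1 = 1 from rfl,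
        show (2:ℕ)-2 = 0 from rfl, Nat.choose_one_right, Nat.choose_zero_right,
        ite_true, ite_false]
      push_cast
      have hd1pos : (0:ℝ) < a * ((m:ℝ)+2) + ((m+2).choose 2 : ℝ) := by positivity
      have hd2pos : (0:ℝ) < ((m:ℝ)+3-1) * ((m:ℝ)+3-2) * (2*a+((m:ℝ)+3)-2) := by
        have hm : (0:ℝ) ≤ (m:ℝ) := Nat.cast_nonneg m
        have h1 : (0:ℝ) < (m:ℝ)+3-1 := by linarith
        have h2 : (0:ℝ) < (m:ℝ)+3-2 := by linarith
        have h3 : (0:ℝ) < 2*a+((m:ℝ)+3)-2 := by linarith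
        exact mul_pos (mul_pos h1 h2) h3
      rw [div_eq_div_iff (ne_of_gt hd1pos) (ne_of_gt hd2pos)]
      linear_combination (-(m:ℝ)-1) * hc2
  · obtain ⟨e, rfl⟩ : ∃ e, d = e + 3 := ⟨d - 3, by omega⟩
    have he : e + 1 ≤ m := by omega
    have hem : (e : ℝ) ≤ (m : ℝ) := by exact_mod_cast Nat.le_of_succ_le he
    have hb3pos : (0:ℝ) < ((m+2).choose (e+3) : ℝ) := by
      exact_mod_cast Nat.choose_pos (by omega : e + 3 ≤ m + 2)
    have e1 : ((m+2).choose (e+2) : ℝ) * ((m:ℝ) - e)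
        = ((m+2).choose (e+3) : ℝ) * ((e:ℝ)+3) := by
      have h := Nat.choose_succ_right_eq (m+2) (e+2)
      rw [show m + 2 - (e+2) = m - e by omega] at h
      have := congrArg (fun n : ℕ => (n : ℝ)) h.symm
      push_cast [Nat.cast_sub (by omega : e ≤ m)] at this
      linarith
    have e2 : ((m:ℝ)+2) * ((m+1).choose (e+2) : ℝ)
        = ((m+2).choose (e+3) : ℝ) * ((e:ℝ)+3) := by
      have h := Nat.add_one_mul_choose_eq (m+1) (e+2)
      exact_mod_cast h
    have e3 : ((m:ℝ)+1) * ((m).choose (e+1) : ℝ)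
        = ((m+1).choose (e+2) : ℝ) * ((e:ℝ)+2) := by
      have h := Nat.add_one_mul_choose_eq m (e+1)
      exact_mod_cast h
    have e4 : ((m:ℝ)+2) * ((m+1).choose (e+1) : ℝ)
        = ((m+2).choose (e+2) : ℝ) * ((e:ℝ)+2) := by
      have h := Nat.add_one_mul_choose_eq (m+1) (e+1)
      exact_mod_cast h
    have e5 : ((m:ℝ)+1) * ((m).choose e : ℝ)
        = ((m+1).choose (e+1) : ℝ) * ((e:ℝ)+1) := by
      have h := Nat.add_one_mul_choose_eq m e
      exact_mod_cast h
    simp only [show 3 ≤ e + 3 by omega, show 2 ≤ e + 3 by omega,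
      show e + 3 - 3 = e from rfl, show e + 3 - 2 = e + 1 from rfl,
      show e + 3 - 1 = e + 2 from rfl, show m + 3 - 3 = m from rfl,
      show m + 3 - 1 = m + 2 from rfl, ite_true, if_pos]
    push_cast
    have hd1pos : (0:ℝ) < a * ((m+2).choose (e+2) : ℝ) + ((m+2).choose (e+3) : ℝ) := by
      positivity
    have hd2pos : (0:ℝ) < ((m:ℝ)+3-1) * ((m:ℝ)+3-2) * (((e:ℝ)+3)*a+((m:ℝ)+3)-((e:ℝ)+3)) := by
      have hm : (0:ℝ) ≤ (m:ℝ) := Nat.cast_nonneg m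
      have h1 : (0:ℝ) < (m:ℝ)+3-1 := by linarith
      have h2 : (0:ℝ) < (m:ℝ)+3-2 := by linarith
      have h3 : (0:ℝ) < ((e:ℝ)+3)*a+((m:ℝ)+3)-((e:ℝ)+3) := by nlinarith [hem]
      exact mul_pos (mul_pos h1 h2) h3
    rw [div_eq_div_iff (ne_of_gt hd1pos) (ne_of_gt hd2pos)]
    linear_combination a*((m:ℝ)+2)*(((e:ℝ)+3)*a+(m:ℝ)-(e:ℝ))*e5
      + a*((e:ℝ)+1)*(((e:ℝ)+3)*a+(m:ℝ)-(e:ℝ))*e4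
      + ((m:ℝ)+2)*(((e:ℝ)+3)*a+(m:ℝ)-(e:ℝ))*e3
      + ((e:ℝ)+2)*(((e:ℝ)+3)*a+(m:ℝ)-(e:ℝ))*e2
      - 2*a*((e:ℝ)+2)*e1

lemma zeta_closed (ε : ℝ) (K d : ℕ) (hK : 3 ≤ K) (hd1 : 1 ≤ d) (hd2 : d ≤ K - 1) :
    zetaD ε K d
      = (d : ℝ) * (Real.exp ε * ((d : ℝ) - 1) + (K : ℝ) - (d : ℝ))
        / (((K : ℝ) - 1) * ((d : ℝ) * Real.exp ε + (K : ℝ) - (d : ℝ))) := by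
  have ha : 0 < Real.exp ε := Real.exp_pos ε
  have hd1' : (1:ℝ) ≤ (d:ℝ) := by exact_mod_cast hd1
  have hdK : (d:ℝ) + 1 ≤ (K:ℝ) := by exact_mod_cast (by omega : d + 1 ≤ K)
  have hK3 : (3:ℝ) ≤ (K:ℝ) := by exact_mod_cast hK
  have h1 : (d:ℝ) * Real.exp ε + (K:ℝ) - (d:ℝ) ≠ 0 := by nlinarith
  have h2 : (K:ℝ) - 1 ≠ 0 := by nlinarith
  unfold zetaD gammaD
  field_simp
  ring

theorem stmt_13 (ε : ℝ) (hε : 0 < ε) (K : ℕ) (hK : 3 ≤ K) (d : ℕ)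
    (hd1 : 1 ≤ d) (hd2 : d ≤ K - 1) (y : Fin K) :
    (∀ k k' : Fin K, k ≠ y → k' ≠ y → k ≠ k' →
      -(zetaD ε K d) ^ 2 ≤
          (∑ A : Finset (Fin K),
            (if k ∈ A ∧ k' ∈ A then dSubsetProb ε K d y A else 0)) - (zetaD ε K d) ^ 2 ∧
        (∑ A : Finset (Fin K),
            (if k ∈ A ∧ k' ∈ A then dSubsetProb ε K d y A else 0)) - (zetaD ε K d) ^ 2
          ≤ 0) ∧
    (∀ k k' l l' : Fin K, k ≠ y → k' ≠ y → k ≠ k' → l ≠ y → l' ≠ y → l ≠ l' →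
      (∑ A : Finset (Fin K),
          (if k ∈ A ∧ k' ∈ A then dSubsetProb ε K d y A else 0))
        = ∑ A : Finset (Fin K),
            (if l ∈ A ∧ l' ∈ A then dSubsetProb ε K d y A else 0)) := by
  have ha : 0 < Real.exp ε := Real.exp_pos ε
  set a : ℝ := Real.exp ε with haa
  have hsum : ∀ k k' : Fin K, k ≠ y → k' ≠ y → k ≠ k' →
      (∑ A : Finset (Fin K), (if k ∈ A ∧ k' ∈ A then dSubsetProb ε K d y A else 0))
        = (d : ℝ) * ((d : ℝ) - 1) * (a * ((d : ℝ) - 2) + (K : ℝ) - (d : ℝ))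
          / (((K : ℝ) - 1) * ((K : ℝ) - 2) * ((d : ℝ) * a + (K : ℝ) - (d : ℝ))) := by
    intro k k' hk hk' hkk'
    rw [sum_eq_d ε K d y k k' hk hk' hkk', closed_eq_d ε K d hK hd1 hd2]
  refine ⟨?_, fun k k' l l' hk hk' hkk' hl hl' hll' => by
    rw [hsum k k' hk hk' hkk', hsum l l' hl hl' hll']⟩
  intro k k' hk hk' hkk'
  rw [hsum k k' hk hk' hkk', zeta_closed ε K d hK hd1 hd2]
  have hd1' : (1:ℝ) ≤ (d:ℝ) := by exact_mod_cast hd1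
  have hdK : (d:ℝ) + 1 ≤ (K:ℝ) := by exact_mod_cast (by omega : d + 1 ≤ K)
  have hK3 : (3:ℝ) ≤ (K:ℝ) := by exact_mod_cast hK
  have hden : 0 < (d:ℝ) * a + (K:ℝ) - (d:ℝ) := by nlinarith
  have hn1 : 0 < (K:ℝ) - 1 := by linarith
  have hn2 : 0 < (K:ℝ) - 2 := by linarith
  have hu : 0 < a * ((d:ℝ) - 1) + (K:ℝ) - (d:ℝ) := by nlinarith
  set Z : ℝ := (d:ℝ) * (a * ((d:ℝ) - 1) + (K:ℝ) - (d:ℝ))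
      / (((K:ℝ) - 1) * ((d:ℝ) * a + (K:ℝ) - (d:ℝ))) with hZ
  rcases (by omega : d = 1 ∨ 2 ≤ d) with rfl | hd2'
  · have hP0 : ((1:ℕ):ℝ) * (((1:ℕ):ℝ) - 1) * (a * (((1:ℕ):ℝ) - 2) + (K:ℝ) - ((1:ℕ):ℝ))
        / (((K:ℝ) - 1) * ((K:ℝ) - 2) * (((1:ℕ):ℝ) * a + (K:ℝ) - ((1:ℕ):ℝ))) = 0 := by
      norm_num
    rw [hP0]
    constructor <;> nlinarith [sq_nonneg Z]
  · have hdd2 : (2:ℝ) ≤ (d:ℝ) := by exact_mod_cast hd2'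
    have hP : 0 ≤ (d:ℝ) * ((d:ℝ) - 1) * (a * ((d:ℝ) - 2) + (K:ℝ) - (d:ℝ))
        / (((K:ℝ) - 1) * ((K:ℝ) - 2) * ((d:ℝ) * a + (K:ℝ) - (d:ℝ))) := by
      apply div_nonneg
      · have h1 : (0:ℝ) ≤ (d:ℝ) * ((d:ℝ) - 1) := by nlinarith
        have h2 : (0:ℝ) ≤ a * ((d:ℝ) - 2) + (K:ℝ) - (d:ℝ) := by nlinarith
        exact mul_nonneg h1 h2
      · positivity
    have hPle : (d:ℝ) * ((d:ℝ) - 1) * (a * ((d:ℝ) - 2) + (K:ℝ) - (d:ℝ))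
          / (((K:ℝ) - 1) * ((K:ℝ) - 2) * ((d:ℝ) * a + (K:ℝ) - (d:ℝ))) ≤ Z ^ 2 := by
      rw [hZ, div_pow, div_le_div_iff₀ (by positivity) (by positivity)]
      have hA : (0:ℝ) ≤ ((K:ℝ) - 1) * ((a * ((d:ℝ) - 1) + (K:ℝ) - (d:ℝ)) + a) * (d:ℝ) *
          ((a * ((d:ℝ) - 1) + (K:ℝ) - (d:ℝ)) ^ 2 * ((K:ℝ) - 1 - (d:ℝ))
            + ((d:ℝ) - 1) * ((K:ℝ) - 1) * a ^ 2) := by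
        apply mul_nonneg
        · apply mul_nonneg
          · apply mul_nonneg hn1.le
            nlinarith
          · linarith
        · apply add_nonneg
          · apply mul_nonneg (sq_nonneg _)
            linarith
          · apply mul_nonneg (mul_nonneg (by linarith) hn1.le) (sq_nonneg a)
      have hid : ((d:ℝ) * (a * ((d:ℝ) - 1) + (K:ℝ) - (d:ℝ))) ^ 2 *
            (((K:ℝ) - 1) * ((K:ℝ) - 2) * ((d:ℝ) * a + (K:ℝ) - (d:ℝ)))
          - (d:ℝ) * ((d:ℝ) - 1) * (a * ((d:ℝ) - 2) + (K:ℝ) - (d:ℝ)) *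
            (((K:ℝ) - 1) * ((d:ℝ) * a + (K:ℝ) - (d:ℝ))) ^ 2
          = ((K:ℝ) - 1) * ((a * ((d:ℝ) - 1) + (K:ℝ) - (d:ℝ)) + a) * (d:ℝ) *
            ((a * ((d:ℝ) - 1) + (K:ℝ) - (d:ℝ)) ^ 2 * ((K:ℝ) - 1 - (d:ℝ))
              + ((d:ℝ) - 1) * ((K:ℝ) - 1) * a ^ 2) := by ring
      linarith [hA, hid]
    exact ⟨by linarith, by linarith⟩
end

section
/- Let ε > 0, K ≥ 2 an integer, 1 ≤ d ≤ min{K − 1, 2K/3}, y ∈ [K], L ≥ 0, and let v_1, …, v_K be vectors in a real inner product space with ‖v_k‖ ≤ L for all k. Let S be drawn from the d-subset selection distribution with true label y, and let ĝ = (1/(γ_d − ζ_d)) · Σ_{k ∈ [K]} (1{k ∈ S} − ζ_d) · v_k, where γ_d = d e^ε/(d e^ε + K − d) and ζ_d = (d − γ_d)/(K − 1). Then E[‖ĝ‖²] ≤ 18·(e^ε + K/d)²·(1 + d)·L²/(e^ε − 1)². -/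
open Finset

open RealInnerProductSpace

lemma count_aux {K : ℕ} (d : ℕ) (s t : Finset (Fin K)) (hst : Disjoint s t) :
    ((univ : Finset (Finset (Fin K))).filter
      (fun A => A.card = d ∧ s ⊆ A ∧ Disjoint A t)).card
    = if s.card ≤ d then (K - s.card - t.card).choose (d - s.card) else 0 := by
  split_ifs with hs
  · have hcard : (univ \ (s ∪ t)).card = K - s.card - t.card := by
      rw [card_sdiff_of_subset (subset_univ _), card_union_of_disjoint hst, card_univ, Fintype.card_fin,
        Nat.sub_sub]
    rw [← hcard, ← card_powersetCard]
    apply card_bij' (fun A _ => A \ s) (fun B _ => B ∪ s)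
    · intro A hA
      simp only [mem_filter, mem_univ, true_and] at hA
      obtain ⟨h1, h2, h3⟩ := hA
      rw [mem_powersetCard]
      constructor
      · intro x hx
        simp only [mem_sdiff] at hx ⊢
        refine ⟨mem_univ x, ?_⟩
        simp only [mem_union]
        rintro (h | h)
        · exact hx.2 h
        · exact (disjoint_left.mp h3) hx.1 h
      · rw [card_sdiff_of_subset h2, h1]
    · intro B hB
      rw [mem_powersetCard] at hB
      obtain ⟨h1, h2⟩ := hB
      have hBs : Disjoint B s := by
        apply disjoint_left.mpr
        intro x hx hxs
        have := h1 hx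
        simp [mem_sdiff, mem_union] at this
        exact this.1 hxs
      simp only [mem_filter, mem_univ, true_and]
      refine ⟨?_, subset_union_right, ?_⟩
      · rw [card_union_of_disjoint hBs, h2]
        omega
      · apply disjoint_left.mpr
        intro x hx hxt
        rcases mem_union.mp hx with h | h
        · have := h1 h
          simp [mem_sdiff, mem_union] at this
          exact this.2 hxt
        · exact (disjoint_left.mp hst) h hxt
    · intro A hA
      simp only [mem_filter, mem_univ, true_and] at hA
      exact sdiff_union_of_subset hA.2.1
    · intro B hB
      rw [mem_powersetCard] at hB
      apply union_sdiff_cancel_right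
      apply disjoint_left.mpr
      intro x hx hxs
      have := hB.1 hx
      simp [mem_sdiff, mem_union] at this
      exact this.1 hxs
  · rw [card_eq_zero, filter_eq_empty_iff]
    intro A _
    rintro ⟨h1, h2, -⟩
    exact hs (h1 ▸ card_le_card h2)

lemma moment_aux{K : ℕ} (ε : ℝ) (d : ℕ) (y : Fin K) (s : Finset (Fin K)) :
    ∑ A : Finset (Fin K), dSubsetProb ε K d y A * ∏ i ∈ s, (if i ∈ A then (1:ℝ) else 0)
    = (Real.exp ε * ((univ : Finset (Finset (Fin K))).filter
          (fun A => A.card = d ∧ insert y s ⊆ A ∧ Disjoint A (∅ : Finset (Fin K)))).card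
       + ((univ : Finset (Finset (Fin K))).filter
          (fun A => A.card = d ∧ s ⊆ A ∧ Disjoint A ({y} : Finset (Fin K)))).card)
      / (Real.exp ε * (K - 1).choose (d - 1) + (K - 1).choose d) := by
  set D : ℝ := Real.exp ε * (K - 1).choose (d - 1) + (K - 1).choose d with hD
  have key : ∀ A : Finset (Fin K),
      dSubsetProb ε K d y A * ∏ i ∈ s, (if i ∈ A then (1:ℝ) else 0)
      = (if A.card = d ∧ insert y s ⊆ A ∧ Disjoint A (∅ : Finset (Fin K))
          then Real.exp ε / D else 0)
        + (if A.card = d ∧ s ⊆ A ∧ Disjoint A ({y} : Finset (Fin K)) then 1 / D else 0) := by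
    intro A
    have hprod : (∏ i ∈ s, (if i ∈ A then (1:ℝ) else 0)) = if s ⊆ A then 1 else 0 := by
      rw [Finset.prod_boole]
      simp [Finset.subset_iff]
    rw [hprod, dSubsetProb, ← hD]
    by_cases h1 : A.card = d
    · by_cases h2 : s ⊆ A
      · by_cases h3 : y ∈ A
        · simp [h1, h2, h3, insert_subset_iff, disjoint_singleton_right]
        · simp [h1, h2, h3, insert_subset_iff, disjoint_singleton_right]
      · have : ¬ insert y s ⊆ A := fun h => h2 (subset_trans (subset_insert y s) h)
        simp [h1, h2, this]
    · simp [h1]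
  rw [Finset.sum_congr rfl (fun A _ => key A), Finset.sum_add_distrib]
  rw [Finset.sum_filter (s := univ) (p := fun A : Finset (Fin K) => A.card = d ∧ insert y s ⊆ A ∧ Disjoint A ∅) (f := fun _ => Real.exp ε / D) |>.symm]
  rw [Finset.sum_filter (s := univ) (p := fun A : Finset (Fin K) => A.card = d ∧ s ⊆ A ∧ Disjoint A {y}) (f := fun _ => 1 / D) |>.symm]
  simp only [Finset.sum_const, nsmul_eq_mul]
  ring

lemma Dden_pos {K : ℕ} (ε : ℝ) (d : ℕ) (hd : d - 1 ≤ K - 1) :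
    0 < Real.exp ε * (K - 1).choose (d - 1) + (K - 1).choose d := by
  have h1 : 0 < (K - 1).choose (d - 1) := Nat.choose_pos hd
  have hE : (0:ℝ) < Real.exp ε := Real.exp_pos ε
  have h2 : (1:ℝ) ≤ ((K - 1).choose (d - 1) : ℝ) := by exact_mod_cast h1
  positivity

lemma F1 {K : ℕ} (ε : ℝ) (d : ℕ) (y : Fin K) (hK : 2 ≤ K) (hd1 : 1 ≤ d) (hd2 : d ≤ K - 1) :
    ∑ A : Finset (Fin K), dSubsetProb ε K d y A = 1 := by
  have := moment_aux (K := K) ε d y ∅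
  simp only [Finset.prod_empty, mul_one] at this
  rw [this, count_aux d _ _ (disjoint_empty_right _), count_aux d _ _ (by simp)]
  simp only [LawfulSingleton.insert_empty_eq, card_singleton, card_empty, hd1, if_pos, Nat.zero_le,
    Nat.sub_zero]
  rw [div_eq_one_iff_eq (ne_of_gt (Dden_pos ε d (by omega)))]

lemma nat_id1 {K d : ℕ} (hK : 2 ≤ K) (hd : 2 ≤ d) :
    (K-1) * (K-2).choose (d-2) = (d-1) * (K-1).choose (d-1) := by
  have h := Nat.add_one_mul_choose_eq (K-2) (d-2)
  have e1 : K - 2 + 1 = K - 1 := by omega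
  have e2 : d - 2 + 1 = d - 1 := by omega
  simp only [Nat.succ_eq_add_one, e1, e2] at h
  rw [h, Nat.mul_comm]

lemma nat_id2 {K d : ℕ} (hK : 2 ≤ K) (hd1 : 1 ≤ d) (hd2 : d ≤ K - 1) :
    (K-1) * (K-2).choose (d-1) = (K-d) * (K-1).choose (d-1) := by
  have h := Nat.add_one_mul_choose_eq (K-2) (d-1)
  have e1 : K - 2 + 1 = K - 1 := by omega
  have e2 : d - 1 + 1 = d := by omega
  simp only [Nat.succ_eq_add_one, e1, e2] at h
  have h3 := Nat.choose_succ_right_eq (K-1) (d-1)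
  rw [e2] at h3
  have e3 : K - 1 - (d-1) = K - d := by omega
  rw [e3] at h3
  rw [h, h3, Nat.mul_comm]

lemma nat_id3 {K d : ℕ} (hK : 2 ≤ K) (hd1 : 1 ≤ d) (hd2 : d ≤ K - 1) :
    d * (K-1).choose d = (K-d) * (K-1).choose (d-1) := by
  have h3 := Nat.choose_succ_right_eq (K-1) (d-1)
  have e2 : d - 1 + 1 = d := by omega
  have e3 : K - 1 - (d-1) = K - d := by omega
  rw [e2, e3] at h3
  calc d * (K-1).choose d = (K-1).choose d * d := Nat.mul_comm _ _
    _ = (K-1).choose (d-1) * (K-d) := h3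
    _ = (K-d) * (K-1).choose (d-1) := Nat.mul_comm _ _

lemma zeta_eq {K : ℕ} (ε : ℝ) (d : ℕ) (hK : 2 ≤ K) (hd1 : 1 ≤ d) (hd2 : d ≤ K - 1) :
    zetaD ε K d
    = (Real.exp ε * (if 2 ≤ d then ((K-2).choose (d-2) : ℝ) else 0) + ((K-2).choose (d-1) : ℝ))
      / (Real.exp ε * (K - 1).choose (d - 1) + (K - 1).choose d) := by
  set E := Real.exp ε with hE
  have hEpos : 0 < E := Real.exp_pos ε
  have hC : (0:ℝ) < ((K-1).choose (d-1) : ℝ) := by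
    exact_mod_cast Nat.choose_pos (show d - 1 ≤ K - 1 by omega)
  have hKd : (d:ℝ) ≤ (K:ℝ) - 1 := by
    have : (d:ℝ) ≤ ((K-1:ℕ):ℝ) := by exact_mod_cast hd2
    rw [Nat.cast_sub (by omega)] at this; exact_mod_cast this
  have hd1' : (1:ℝ) ≤ (d:ℝ) := by exact_mod_cast hd1
  have hden1 : (0:ℝ) < (K:ℝ) - 1 := by
    have : (2:ℝ) ≤ (K:ℝ) := by exact_mod_cast hK
    linarith
  have hden2 : (0:ℝ) < (d:ℝ) * E + (K:ℝ) - (d:ℝ) := by nlinarith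
  have hDpos := Dden_pos (K := K) ε d (by omega)
  rw [← hE] at hDpos
  -- real versions of the nat identities
  have R1 : ((K:ℝ)-1) * (if 2 ≤ d then ((K-2).choose (d-2) : ℝ) else 0)
      = ((d:ℝ)-1) * ((K-1).choose (d-1) : ℝ) := by
    by_cases h : 2 ≤ d
    · rw [if_pos h]
      have := nat_id1 hK h
      have hc : (((K-1) * (K-2).choose (d-2) : ℕ) : ℝ) = (((d-1) * (K-1).choose (d-1) : ℕ) : ℝ) := by
        exact_mod_cast congrArg (Nat.cast (R := ℝ)) this
      push_cast [Nat.cast_sub (show 1 ≤ K by omega), Nat.cast_sub (show 1 ≤ d by omega)] at hc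
      linarith
    · rw [if_neg h]
      have hd' : d = 1 := by omega
      subst hd'
      simp
  have R2 : ((K:ℝ)-1) * ((K-2).choose (d-1) : ℝ) = ((K:ℝ)-(d:ℝ)) * ((K-1).choose (d-1) : ℝ) := by
    have := nat_id2 hK hd1 hd2
    have hc : (((K-1) * (K-2).choose (d-1) : ℕ) : ℝ) = (((K-d) * (K-1).choose (d-1) : ℕ) : ℝ) := by
      exact_mod_cast congrArg (Nat.cast (R := ℝ)) this
    push_cast [Nat.cast_sub (show 1 ≤ K by omega), Nat.cast_sub (show d ≤ K by omega)] at hc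
    linarith
  have R3 : (d:ℝ) * ((K-1).choose d : ℝ) = ((K:ℝ)-(d:ℝ)) * ((K-1).choose (d-1) : ℝ) := by
    have := nat_id3 hK hd1 hd2
    have hc : ((d * (K-1).choose d : ℕ) : ℝ) = (((K-d) * (K-1).choose (d-1) : ℕ) : ℝ) := by
      exact_mod_cast congrArg (Nat.cast (R := ℝ)) this
    push_cast [Nat.cast_sub (show d ≤ K by omega)] at hc
    linarith
  set c2 : ℝ := (if 2 ≤ d then ((K-2).choose (d-2) : ℝ) else 0) with hc2
  set c3 : ℝ := ((K-2).choose (d-1) : ℝ) with hc3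
  set c4 : ℝ := ((K-1).choose d : ℝ) with hc4
  set C : ℝ := ((K-1).choose (d-1) : ℝ) with hCdef
  rw [zetaD, gammaD, ← hE]
  rw [div_eq_div_iff (by linarith) (by positivity)]
  have hne : (d:ℝ) * E + (K:ℝ) - (d:ℝ) ≠ 0 := ne_of_gt hden2
  field_simp
  linear_combination (((d:ℝ)-1) * E + (K:ℝ) - (d:ℝ)) * R3 - E * ((d:ℝ)*E + (K:ℝ) - (d:ℝ)) * R1 - ((d:ℝ)*E + (K:ℝ) - (d:ℝ)) * R2

lemma F2 {K : ℕ} (ε : ℝ) (d : ℕ) (y k : Fin K) (hK : 2 ≤ K) (hd1 : 1 ≤ d) (hd2 : d ≤ K - 1)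
    (hky : k ≠ y) :
    ∑ A : Finset (Fin K), dSubsetProb ε K d y A * (if k ∈ A then (1:ℝ) else 0) = zetaD ε K d := by
  have hm := moment_aux (K := K) ε d y {k}
  simp only [Finset.prod_singleton] at hm
  rw [hm, count_aux d _ _ (disjoint_empty_right _), count_aux d _ _ (by simp [Ne.symm hky, hky]),
    card_insert_of_notMem (by simp [Ne.symm hky]), card_singleton, card_empty,
    zeta_eq ε d hK hd1 hd2]
  norm_num [hd1, Nat.sub_sub]

noncomputable def p2val (ε : ℝ) (K d : ℕ) : ℝ :=
  (Real.exp ε * (if 3 ≤ d then ((K-3).choose (d-3) : ℝ) else 0)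
    + (if 2 ≤ d then ((K-3).choose (d-2) : ℝ) else 0))
  / (Real.exp ε * (K - 1).choose (d - 1) + (K - 1).choose d)

lemma F3 {K : ℕ} (ε : ℝ) (d : ℕ) (y j k : Fin K) (hjy : j ≠ y) (hky : k ≠ y) (hjk : j ≠ k) :
    ∑ A : Finset (Fin K), dSubsetProb ε K d y A *
      ((if j ∈ A then (1:ℝ) else 0) * (if k ∈ A then (1:ℝ) else 0)) = p2val ε K d := by
  have hm := moment_aux (K := K) ε d y {j, k}
  simp only [Finset.prod_pair hjk] at hm
  rw [hm, count_aux d _ _ (disjoint_empty_right _),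
    count_aux d _ _ (by simp [Ne.symm hjy, Ne.symm hky]),
    card_insert_of_notMem (by simp [Ne.symm hjy, Ne.symm hky]),
    card_insert_of_notMem (by simp [hjk]), card_singleton, card_empty]
  rw [p2val]
  norm_num [Nat.sub_sub]

lemma p2_nonneg {K : ℕ} (ε : ℝ) (d : ℕ) (hd : d - 1 ≤ K - 1) : 0 ≤ p2val ε K d := by
  rw [p2val]
  apply div_nonneg _ (le_of_lt (Dden_pos ε d hd))
  have := Real.exp_pos ε
  positivity

lemma p2_le_zeta {K : ℕ} (ε : ℝ) (d : ℕ) (hK : 2 ≤ K) (hd1 : 1 ≤ d) (hd2 : d ≤ K - 1) :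
    p2val ε K d ≤ zetaD ε K d := by
  rw [p2val, zeta_eq ε d hK hd1 hd2]
  have hD := Dden_pos (K := K) ε d (by omega)
  rw [div_le_div_iff_of_pos_right hD]
  have hE : (0:ℝ) ≤ Real.exp ε := (Real.exp_pos ε).le
  apply add_le_add
  · apply mul_le_mul_of_nonneg_left _ hE
    by_cases h3 : 3 ≤ d
    · rw [if_pos h3, if_pos (by omega)]
      have hK3 : 3 ≤ K := by omega
      have e1 : K - 2 = (K - 3) + 1 := by omega
      have e2 : d - 2 = (d - 3) + 1 := by omega
      rw [e1, e2, Nat.choose_succ_succ]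
      exact_mod_cast Nat.le_add_right _ _
    · rw [if_neg h3]
      split_ifs with h2
      · positivity
      · exact le_refl 0
  · by_cases h2 : 2 ≤ d
    · rw [if_pos h2]
      have hK3 : 3 ≤ K := by omega
      have e1 : K - 2 = (K - 3) + 1 := by omega
      have e2 : d - 1 = (d - 2) + 1 := by omega
      rw [e1, e2, Nat.choose_succ_succ]
      exact_mod_cast Nat.le_add_right _ _
    · rw [if_neg h2]
      positivity


section scalar
variable {K d : ℕ} {ε : ℝ}

lemma gamma_mem (hε : 0 < ε) (hK : 2 ≤ K) (hd1 : 1 ≤ d) (hd2 : d ≤ K - 1) :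
    0 ≤ gammaD ε K d ∧ gammaD ε K d ≤ 1 := by
  have hE : 1 < Real.exp ε := by
    rw [show (1:ℝ) = Real.exp 0 by simp]; exact Real.exp_lt_exp.mpr hε
  have hd1' : (1:ℝ) ≤ (d:ℝ) := by exact_mod_cast hd1
  have hKd : (d:ℝ) + 1 ≤ (K:ℝ) := by
    have : d + 1 ≤ K := by omega
    exact_mod_cast this
  have hden : 0 < (d:ℝ) * Real.exp ε + (K:ℝ) - (d:ℝ) := by nlinarith
  constructor
  · rw [gammaD]; positivity
  · rw [gammaD, div_le_one hden]; nlinarith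

lemma zeta_mem (hε : 0 < ε) (hK : 2 ≤ K) (hd1 : 1 ≤ d) (hd2 : d ≤ K - 1) :
    0 ≤ zetaD ε K d ∧ zetaD ε K d * ((K:ℝ) - 1) ≤ d := by
  obtain ⟨h1, h2⟩ := gamma_mem hε hK hd1 hd2
  have hK1 : (0:ℝ) < (K:ℝ) - 1 := by
    have : (2:ℝ) ≤ (K:ℝ) := by exact_mod_cast hK
    linarith
  have hd1' : (1:ℝ) ≤ (d:ℝ) := by exact_mod_cast hd1
  rw [zetaD]
  constructor
  · apply div_nonneg _ hK1.le; linarith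
  · rw [div_mul_cancel₀ _ (ne_of_gt hK1)]; linarith

lemma zeta_le_one (hε : 0 < ε) (hK : 2 ≤ K) (hd1 : 1 ≤ d) (hd2 : d ≤ K - 1) :
    zetaD ε K d ≤ 1 := by
  obtain ⟨h1, h2⟩ := gamma_mem hε hK hd1 hd2
  have hK1 : (0:ℝ) < (K:ℝ) - 1 := by
    have : (2:ℝ) ≤ (K:ℝ) := by exact_mod_cast hK
    linarith
  have hdK : (d:ℝ) ≤ (K:ℝ) - 1 := by
    have : (d:ℝ) ≤ ((K-1:ℕ):ℝ) := by exact_mod_cast hd2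
    rwa [Nat.cast_sub (by omega), Nat.cast_one] at this
  rw [zetaD, div_le_one hK1]; linarith

lemma zeta_mul (hK : 2 ≤ K) :
    zetaD ε K d * ((K:ℝ) - 1) = (d:ℝ) - gammaD ε K d := by
  have hK1 : ((K:ℝ) - 1) ≠ 0 := by
    have : (2:ℝ) ≤ (K:ℝ) := by exact_mod_cast hK
    linarith
  rw [zetaD, div_mul_cancel₀ _ hK1]

lemma diff_pos (hε : 0 < ε) (hK : 2 ≤ K) (hd1 : 1 ≤ d) (hd2 : d ≤ K - 1) :
    0 < gammaD ε K d - zetaD ε K d := by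
  have hE : 1 < Real.exp ε := by
    rw [show (1:ℝ) = Real.exp 0 by simp]; exact Real.exp_lt_exp.mpr hε
  have hd1' : (1:ℝ) ≤ (d:ℝ) := by exact_mod_cast hd1
  have hKd : (d:ℝ) + 1 ≤ (K:ℝ) := by
    have : d + 1 ≤ K := by omega
    exact_mod_cast this
  have hden : 0 < (d:ℝ) * Real.exp ε + (K:ℝ) - (d:ℝ) := by nlinarith
  have hK1 : (0:ℝ) < (K:ℝ) - 1 := by linarith
  have hdiff : gammaD ε K d - zetaD ε K d
      = (d:ℝ) * ((K:ℝ) - (d:ℝ)) * (Real.exp ε - 1) / (((K:ℝ) - 1) * ((d:ℝ) * Real.exp ε + (K:ℝ) - (d:ℝ))) := by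
    rw [zetaD, gammaD]
    field_simp
    ring
  rw [hdiff]
  apply div_pos
  · apply mul_pos (mul_pos (by linarith : (0:ℝ) < (d:ℝ)) (by linarith : (0:ℝ) < (K:ℝ) - (d:ℝ)))
    linarith
  · exact mul_pos hK1 hden

lemma inv_diff_le (hε : 0 < ε) (hK : 2 ≤ K) (hd1 : 1 ≤ d) (hd2 : d ≤ K - 1)
    (hd3 : (d : ℝ) ≤ 2 * K / 3) :
    1 / (gammaD ε K d - zetaD ε K d) ≤ 3 * (Real.exp ε + K / d) / (Real.exp ε - 1) := by
  have hE : 1 < Real.exp ε := by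
    rw [show (1:ℝ) = Real.exp 0 by simp]; exact Real.exp_lt_exp.mpr hε
  set E := Real.exp ε with hEdef
  have hd1' : (1:ℝ) ≤ (d:ℝ) := by exact_mod_cast hd1
  have hKd : (d:ℝ) + 1 ≤ (K:ℝ) := by
    have : d + 1 ≤ K := by omega
    exact_mod_cast this
  have hden : 0 < (d:ℝ) * E + (K:ℝ) - (d:ℝ) := by nlinarith
  have hK1 : (0:ℝ) < (K:ℝ) - 1 := by linarith
  have hdiff : gammaD ε K d - zetaD ε K d
      = (d:ℝ) * ((K:ℝ) - (d:ℝ)) * (E - 1) / (((K:ℝ) - 1) * ((d:ℝ) * E + (K:ℝ) - (d:ℝ))) := by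
    rw [zetaD, gammaD, ← hEdef]
    field_simp
    ring
  have h3 : (K:ℝ) ≤ 3 * ((K:ℝ) - (d:ℝ)) := by linarith
  have hKdre : (0:ℝ) < (K:ℝ) - (d:ℝ) := by linarith
  rw [hdiff, one_div_div]
  rw [div_le_div_iff₀ (mul_pos (mul_pos (by linarith : (0:ℝ) < (d:ℝ)) hKdre) (by linarith : (0:ℝ) < E - 1)) (by linarith : (0:ℝ) < E - 1)]
  have hexp : 3 * (E + (K:ℝ) / (d:ℝ)) * ((d:ℝ) * ((K:ℝ) - (d:ℝ)) * (E - 1))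
      = 3 * ((d:ℝ) * E + (K:ℝ)) * (((K:ℝ) - (d:ℝ)) * (E - 1)) := by
    field_simp
  rw [hexp]
  have key : ((K:ℝ) - 1) * ((d:ℝ) * E + (K:ℝ) - (d:ℝ)) ≤ 3 * ((d:ℝ) * E + (K:ℝ)) * ((K:ℝ) - (d:ℝ)) := by
    have s1 : ((K:ℝ) - 1) * ((d:ℝ) * E + (K:ℝ) - (d:ℝ)) ≤ (K:ℝ) * ((d:ℝ) * E + (K:ℝ)) := by
      apply mul_le_mul (by linarith) (by linarith) (le_of_lt hden) (by linarith)
    have s2 : (K:ℝ) * ((d:ℝ) * E + (K:ℝ)) ≤ 3 * ((K:ℝ) - (d:ℝ)) * ((d:ℝ) * E + (K:ℝ)) := by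
      apply mul_le_mul_of_nonneg_right h3 (by nlinarith)
    nlinarith
  nlinarith [mul_le_mul_of_nonneg_right key (by linarith : (0:ℝ) ≤ E - 1)]

end scalar


open RealInnerProductSpace in
lemma norm_sum_sq_expand {V : Type*} [NormedAddCommGroup V] [InnerProductSpace ℝ V]
    {ι : Type*} (s : Finset ι) (c : ι → ℝ) (v : ι → V) :
    ‖∑ k ∈ s, c k • v k‖^2 = ∑ j ∈ s, ∑ k ∈ s, (c j * c k) * ⟪v j, v k⟫ := by
  rw [← real_inner_self_eq_norm_sq, sum_inner]
  refine Finset.sum_congr rfl fun j _ => ?_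
  rw [real_inner_smul_left, inner_sum, Finset.mul_sum]
  refine Finset.sum_congr rfl fun k _ => ?_
  rw [real_inner_smul_right]
  ring

set_option maxHeartbeats 16000000 in
theorem stmt_16 {V : Type*} [NormedAddCommGroup V] [InnerProductSpace ℝ V]
    (ε : ℝ) (hε : 0 < ε) (K : ℕ) (hK : 2 ≤ K) (d : ℕ)
    (hd1 : 1 ≤ d) (hd2 : d ≤ K - 1) (hd3 : (d : ℝ) ≤ 2 * K / 3)
    (y : Fin K) (L : ℝ) (hL : 0 ≤ L) (v : Fin K → V) (hv : ∀ k, ‖v k‖ ≤ L) :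
    (∑ A : Finset (Fin K), dSubsetProb ε K d y A *
        ‖(1 / (gammaD ε K d - zetaD ε K d)) •
            ∑ k : Fin K, ((if k ∈ A then (1 : ℝ) else 0) - zetaD ε K d) • v k‖ ^ 2)
      ≤ 18 * (Real.exp ε + K / d) ^ 2 * (1 + d) * L ^ 2 / (Real.exp ε - 1) ^ 2 := by
  classical
  have hE1 : 1 < Real.exp ε := by
    rw [show (1:ℝ) = Real.exp 0 by simp]; exact Real.exp_lt_exp.mpr hε
  set E := Real.exp ε with hEdef
  set ζ := zetaD ε K d with hzdef
  set γ := gammaD ε K d with hgdef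
  set P : Finset (Fin K) → ℝ := dSubsetProb ε K d y with hPdef
  obtain ⟨hγ0, hγ1⟩ := gamma_mem hε hK hd1 hd2
  obtain ⟨hζ0, hζd⟩ := zeta_mem hε hK hd1 hd2
  rw [← hgdef] at hγ0 hγ1
  rw [← hzdef] at hζ0 hζd
  have hζ1 : ζ ≤ 1 := zeta_le_one hε hK hd1 hd2
  have hζm : ζ * ((K:ℝ) - 1) = (d:ℝ) - γ := zeta_mul hK
  have hK1 : (0:ℝ) < (K:ℝ) - 1 := by
    have : (2:ℝ) ≤ (K:ℝ) := by exact_mod_cast hK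
    linarith
  have hd1' : (1:ℝ) ≤ (d:ℝ) := by exact_mod_cast hd1
  have hL2 : (0:ℝ) ≤ L^2 := sq_nonneg L
  have hP0 : ∀ A : Finset (Fin K), 0 ≤ P A := by
    intro A
    rw [hPdef, dSubsetProb]
    have hD := Dden_pos (K := K) ε d (by omega)
    split_ifs with h1 h2
    · positivity
    · positivity
    · exact le_refl 0
  have hF1 : ∑ A : Finset (Fin K), P A = 1 := by
    rw [hPdef]; exact F1 ε d y hK hd1 hd2
  have hF2 : ∀ j : Fin K, j ≠ y →
      ∑ A : Finset (Fin K), P A * (if j ∈ A then (1:ℝ) else 0) = ζ := by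
    intro j hj
    rw [hPdef, hzdef]; exact F2 ε d y j hK hd1 hd2 hj
  have hF3 : ∀ j k : Fin K, j ≠ y → k ≠ y → j ≠ k →
      ∑ A : Finset (Fin K), P A *
        ((if j ∈ A then (1:ℝ) else 0) * (if k ∈ A then (1:ℝ) else 0)) = p2val ε K d := by
    intro j k hj hk hjk
    rw [hPdef]; exact F3 ε d y j k hj hk hjk
  set p2 := p2val ε K d with hp2def
  have hp2_0 : 0 ≤ p2 := p2_nonneg ε d (by omega)
  have hp2ζ : p2 ≤ ζ := by rw [hp2def, hzdef]; exact p2_le_zeta ε d hK hd1 hd2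
  set X : Fin K → Finset (Fin K) → ℝ := fun k A => (if k ∈ A then (1:ℝ) else 0) - ζ with hXdef
  set t : Finset (Fin K) := univ.erase y with htdef
  have htcard : (t.card : ℝ) = (K:ℝ) - 1 := by
    rw [htdef, card_erase_of_mem (mem_univ y), card_univ, Fintype.card_fin,
      Nat.cast_sub (by omega), Nat.cast_one]
  set S := ∑ j ∈ t, ‖v j‖^2 with hSdef
  have hS0 : 0 ≤ S := by rw [hSdef]; positivity
  have hSle : S ≤ ((K:ℝ) - 1) * L^2 := by
    rw [hSdef, ← htcard]
    calc ∑ j ∈ t, ‖v j‖^2 ≤ ∑ _j ∈ t, L^2 := by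
          apply Finset.sum_le_sum
          intro j _
          nlinarith only [hv j, norm_nonneg (v j)]
      _ = (t.card : ℝ) * L^2 := by rw [Finset.sum_const, nsmul_eq_mul]
  set T := ‖∑ j ∈ t, v j‖^2 with hTdef
  have hT0 : 0 ≤ T := by rw [hTdef]; positivity
  have hTle : T ≤ ((K:ℝ) - 1) * S := by
    have h1 : ‖∑ j ∈ t, v j‖ ≤ ∑ j ∈ t, ‖v j‖ := norm_sum_le _ _
    have h2 : (∑ j ∈ t, ‖v j‖)^2 ≤ (t.card : ℝ) * ∑ j ∈ t, ‖v j‖^2 :=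
      sq_sum_le_card_mul_sum_sq
    rw [hTdef, hSdef, ← htcard]
    nlinarith only [h1, h2, norm_nonneg (∑ j ∈ t, v j)]
  -- moments of X
  have hM_diag : ∀ j : Fin K, j ≠ y →
      ∑ A : Finset (Fin K), P A * (X j A * X j A) = ζ - ζ^2 := by
    intro j hj
    have hpoint : ∀ A : Finset (Fin K), P A * (X j A * X j A)
        = (P A * (if j ∈ A then (1:ℝ) else 0)) * (1 - 2*ζ) + ζ^2 * P A := by
      intro A
      by_cases h : j ∈ A <;> simp only [hXdef, h, if_true, if_false] <;> ring
    rw [Finset.sum_congr rfl fun A _ => hpoint A, Finset.sum_add_distrib, ← Finset.sum_mul,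
      ← Finset.mul_sum, hF2 j hj, hF1]
    ring
  have hM_off : ∀ j k : Fin K, j ≠ y → k ≠ y → j ≠ k →
      ∑ A : Finset (Fin K), P A * (X j A * X k A) = p2 - ζ^2 := by
    intro j k hj hk hjk
    have hpoint : ∀ A : Finset (Fin K), P A * (X j A * X k A)
        = P A * ((if j ∈ A then (1:ℝ) else 0) * (if k ∈ A then (1:ℝ) else 0))
          - ζ * (P A * (if j ∈ A then (1:ℝ) else 0))
          - ζ * (P A * (if k ∈ A then (1:ℝ) else 0)) + ζ^2 * P A := by
      intro A; simp only [hXdef]; ring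
    rw [Finset.sum_congr rfl fun A _ => hpoint A, Finset.sum_add_distrib,
      Finset.sum_sub_distrib, Finset.sum_sub_distrib,
      ← Finset.mul_sum, ← Finset.mul_sum, ← Finset.mul_sum,
      hF3 j k hj hk hjk, hF2 j hj, hF2 k hk, hF1]
    ring
  set b := p2 - ζ^2 with hbdef
  -- second-moment expansion of the erased sum
  have hswap : ∀ f : Fin K → Fin K → Finset (Fin K) → ℝ,
      (∑ A : Finset (Fin K), ∑ j ∈ t, ∑ k ∈ t, f j k A)
      = ∑ j ∈ t, ∑ k ∈ t, ∑ A : Finset (Fin K), f j k A := by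
    intro f
    rw [Finset.sum_comm]
    exact Finset.sum_congr rfl fun j _ => Finset.sum_comm
  have hQ : ∑ A : Finset (Fin K), P A * ‖∑ k ∈ t, X k A • v k‖^2
      = ∑ j ∈ t, ∑ k ∈ t,
          (∑ A : Finset (Fin K), P A * (X j A * X k A)) * ⟪v j, v k⟫ := by
    have h1 : ∀ A : Finset (Fin K), P A * ‖∑ k ∈ t, X k A • v k‖^2
        = ∑ j ∈ t, ∑ k ∈ t, P A * (X j A * X k A) * ⟪v j, v k⟫ := by
      intro A
      rw [norm_sum_sq_expand, Finset.mul_sum]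
      refine Finset.sum_congr rfl fun j _ => ?_
      rw [Finset.mul_sum]
      exact Finset.sum_congr rfl fun k _ => by ring
    rw [Finset.sum_congr rfl fun A _ => h1 A, hswap]
    refine Finset.sum_congr rfl fun j _ => Finset.sum_congr rfl fun k _ => ?_
    rw [Finset.sum_mul]
  have hMval : ∀ j ∈ t, ∀ k ∈ t,
      (∑ A : Finset (Fin K), P A * (X j A * X k A)) * ⟪v j, v k⟫
      = b * ⟪v j, v k⟫ + (if j = k then (ζ - ζ^2 - b) * ‖v j‖^2 else 0) := by
    intro j hj k hk
    have hjy : j ≠ y := (Finset.mem_erase.mp hj).1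
    have hky : k ≠ y := (Finset.mem_erase.mp hk).1
    by_cases hjk : j = k
    · subst hjk
      rw [hM_diag j hjy, if_pos rfl, real_inner_self_eq_norm_sq]
      ring
    · rw [hM_off j k hjy hky hjk, if_neg hjk, hbdef]; ring
  have hTinner : ∑ j ∈ t, ∑ k ∈ t, ⟪v j, v k⟫ = T := by
    have := norm_sum_sq_expand t (fun _ => (1:ℝ)) v
    simp only [one_smul, one_mul] at this
    rw [hTdef, this]
  have hQval : ∑ A : Finset (Fin K), P A * ‖∑ k ∈ t, X k A • v k‖^2
      = (ζ - ζ^2 - b) * S + b * T := by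
    rw [hQ, Finset.sum_congr rfl fun j hj => Finset.sum_congr rfl fun k hk => hMval j hj k hk]
    rw [Finset.sum_congr rfl fun j _ => Finset.sum_add_distrib, Finset.sum_add_distrib]
    have e1 : ∑ j ∈ t, ∑ k ∈ t, b * ⟪v j, v k⟫ = b * T := by
      rw [← hTinner, Finset.mul_sum]
      exact Finset.sum_congr rfl fun j _ => by rw [Finset.mul_sum]
    have e2 : ∑ j ∈ t, ∑ k ∈ t, (if j = k then (ζ - ζ^2 - b) * ‖v j‖^2 else 0)
        = (ζ - ζ^2 - b) * S := by
      rw [hSdef, Finset.mul_sum]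
      refine Finset.sum_congr rfl fun j hj => ?_
      rw [Finset.sum_ite_eq t j (fun _ => (ζ - ζ^2 - b) * ‖v j‖^2), if_pos hj]
    rw [e1, e2]
    ring
  -- total second moment bound (the W-identity)
  have hWpt : ∀ A : Finset (Fin K), P A * (∑ k ∈ t, X k A)^2
      = ∑ j ∈ t, ∑ k ∈ t, P A * (X j A * X k A) := by
    intro A
    rw [sq, Finset.sum_mul_sum, Finset.mul_sum]
    exact Finset.sum_congr rfl fun j _ => by rw [Finset.mul_sum]
  have hWval : ∑ A : Finset (Fin K), P A * (∑ k ∈ t, X k A)^2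
      = ((K:ℝ) - 1) * (ζ - ζ^2 - b) + ((K:ℝ) - 1)^2 * b := by
    rw [Finset.sum_congr rfl fun A _ => hWpt A, hswap]
    have hval : ∀ j ∈ t, ∀ k ∈ t, (∑ A : Finset (Fin K), P A * (X j A * X k A))
        = b + (if j = k then (ζ - ζ^2 - b) else 0) := by
      intro j hj k hk
      have hjy : j ≠ y := (Finset.mem_erase.mp hj).1
      have hky : k ≠ y := (Finset.mem_erase.mp hk).1
      by_cases hjk : j = k
      · subst hjk; rw [hM_diag j hjy, if_pos rfl]; ring
      · rw [hM_off j k hjy hky hjk, if_neg hjk, hbdef]; ring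
    rw [Finset.sum_congr rfl fun j hj => Finset.sum_congr rfl fun k hk => hval j hj k hk]
    rw [Finset.sum_congr rfl fun j _ => Finset.sum_add_distrib, Finset.sum_add_distrib]
    have e1 : ∑ j ∈ t, ∑ _k ∈ t, b = ((K:ℝ) - 1)^2 * b := by
      simp only [Finset.sum_const, nsmul_eq_mul]
      rw [htcard]  -- might not fire inside; fallback below
      ring
    have e2 : ∑ j ∈ t, ∑ k ∈ t, (if j = k then (ζ - ζ^2 - b) else 0)
        = ((K:ℝ) - 1) * (ζ - ζ^2 - b) := by
      have : ∀ j ∈ t, ∑ k ∈ t, (if j = k then (ζ - ζ^2 - b) else 0) = ζ - ζ^2 - b := by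
        intro j hj
        rw [Finset.sum_ite_eq t j (fun _ => ζ - ζ^2 - b), if_pos hj]
      rw [Finset.sum_congr rfl this, Finset.sum_const, nsmul_eq_mul, htcard]
    rw [e1, e2]
    ring
  have hWbound : ∑ A : Finset (Fin K), P A * (∑ k ∈ t, X k A)^2 ≤ 1 := by
    have hpt : ∀ A : Finset (Fin K), P A * (∑ k ∈ t, X k A)^2 ≤ P A := by
      intro A
      by_cases hA : A.card = d
      · have hsum : ∑ k ∈ t, X k A = γ - (if y ∈ A then (1:ℝ) else 0) := by
          have hind : ∑ k ∈ t, (if k ∈ A then (1:ℝ) else 0) = ((A.erase y).card : ℝ) := by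
            rw [Finset.sum_boole]
            congr 2
            ext a
            simp [htdef, Finset.mem_erase, and_comm]
          have hXsum : ∑ k ∈ t, X k A
              = ((A.erase y).card : ℝ) - ((t.card : ℝ)) * ζ := by
            simp only [hXdef]
            rw [Finset.sum_sub_distrib, hind, Finset.sum_const, nsmul_eq_mul]
          rw [hXsum, htcard]
          by_cases hy : y ∈ A
          · rw [Finset.card_erase_of_mem hy, hA, if_pos hy,
              Nat.cast_sub (by omega), Nat.cast_one]
            linarith only [hζm]
          · rw [Finset.erase_eq_of_notMem hy, hA, if_neg hy]
            linarith only [hζm]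
        have hsq : (∑ k ∈ t, X k A)^2 ≤ 1 := by
          rw [hsum]
          by_cases hy : y ∈ A <;> simp only [hy, if_true, if_false] <;>
            nlinarith only [hγ0, hγ1]
        nlinarith only [hP0 A, hsq]
      · have : P A = 0 := by rw [hPdef, dSubsetProb, if_neg hA]
        rw [this]; simp
    calc ∑ A : Finset (Fin K), P A * (∑ k ∈ t, X k A)^2
        ≤ ∑ A : Finset (Fin K), P A := Finset.sum_le_sum fun A _ => hpt A
      _ = 1 := hF1
  -- bound on the erased-sum second moment
  have hQle : ∑ A : Finset (Fin K), P A * ‖∑ k ∈ t, X k A • v k‖^2 ≤ (d:ℝ) * L^2 := by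
    rw [hQval]
    by_cases hb : b ≤ 0
    · have h1 : b * T ≤ 0 := mul_nonpos_of_nonpos_of_nonneg hb hT0
      have h2 : (ζ - ζ^2 - b) * S ≤ ζ * S := by
        apply mul_le_mul_of_nonneg_right _ hS0
        rw [hbdef]; nlinarith
      have h3 : ζ * S ≤ ζ * (((K:ℝ) - 1) * L^2) := mul_le_mul_of_nonneg_left hSle hζ0
      nlinarith only [h1, h2, h3, hζd, hL2]
    · push_neg at hb
      have hcoef : ((K:ℝ) - 1) * ((ζ - ζ^2 - b) + ((K:ℝ) - 1) * b) ≤ 1 := by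
        have hWW := hWval ▸ hWbound
        linarith only [hWW]
      have hzb : ζ - ζ^2 - b = ζ - p2 := by rw [hbdef]; ring
      have hcoef0 : 0 ≤ (ζ - ζ^2 - b) + ((K:ℝ) - 1) * b := by
        nlinarith only [hzb, hp2ζ, hK1, hb]
      have h1 : b * T ≤ b * (((K:ℝ) - 1) * S) := mul_le_mul_of_nonneg_left hTle hb.le
      have h2 : ((ζ - ζ^2 - b) + ((K:ℝ) - 1) * b) * S
          ≤ ((ζ - ζ^2 - b) + ((K:ℝ) - 1) * b) * (((K:ℝ) - 1) * L^2) :=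
        mul_le_mul_of_nonneg_left hSle hcoef0
      nlinarith only [h1, h2, hcoef, hL2, hd1', hS0]
  -- first term bound
  have hfirst : ∑ A : Finset (Fin K), P A * ((X y A)^2 * ‖v y‖^2) ≤ L^2 := by
    calc ∑ A : Finset (Fin K), P A * ((X y A)^2 * ‖v y‖^2)
        ≤ ∑ A : Finset (Fin K), P A * L^2 := by
          apply Finset.sum_le_sum
          intro A _
          apply mul_le_mul_of_nonneg_left _ (hP0 A)
          have h1 : (X y A)^2 ≤ 1 := by
            simp only [hXdef]
            by_cases h : y ∈ A <;> simp only [h, if_true, if_false] <;>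
              nlinarith only [hζ0, hζ1]
          have h2 : ‖v y‖^2 ≤ L^2 := by nlinarith only [hv y, norm_nonneg (v y)]
          nlinarith only [h1, h2, sq_nonneg (X y A), sq_nonneg ‖v y‖]
      _ = L^2 := by rw [← Finset.sum_mul, hF1, one_mul]
  -- split pointwise
  have hsplit : ∀ A : Finset (Fin K),
      ‖∑ k : Fin K, ((if k ∈ A then (1:ℝ) else 0) - ζ) • v k‖^2
      ≤ 2 * ((X y A)^2 * ‖v y‖^2) + 2 * ‖∑ k ∈ t, X k A • v k‖^2 := by
    intro A
    have hdecomp : ∑ k : Fin K, ((if k ∈ A then (1:ℝ) else 0) - ζ) • v k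
        = X y A • v y + ∑ k ∈ t, X k A • v k := by
      rw [htdef]
      exact (Finset.add_sum_erase univ (fun k => X k A • v k) (mem_univ y)).symm
    rw [hdecomp]
    have h1 : ‖X y A • v y + ∑ k ∈ t, X k A • v k‖
        ≤ ‖X y A • v y‖ + ‖∑ k ∈ t, X k A • v k‖ := norm_add_le _ _
    have h2 : ‖X y A • v y‖^2 = (X y A)^2 * ‖v y‖^2 := by
      rw [norm_smul, mul_pow, Real.norm_eq_abs, sq_abs]
    nlinarith only [h1, h2, norm_nonneg (X y A • v y), norm_nonneg (∑ k ∈ t, X k A • v k),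
      norm_nonneg (X y A • v y + ∑ k ∈ t, X k A • v k),
      sq_nonneg (‖X y A • v y‖ - ‖∑ k ∈ t, X k A • v k‖)]
  -- the expectation without the scaling factor
  have hmid : ∑ A : Finset (Fin K),
      P A * ‖∑ k : Fin K, ((if k ∈ A then (1:ℝ) else 0) - ζ) • v k‖^2
      ≤ 2 * (1 + (d:ℝ)) * L^2 := by
    calc ∑ A : Finset (Fin K),
        P A * ‖∑ k : Fin K, ((if k ∈ A then (1:ℝ) else 0) - ζ) • v k‖^2
        ≤ ∑ A : Finset (Fin K),
            (2 * (P A * ((X y A)^2 * ‖v y‖^2)) + 2 * (P A * ‖∑ k ∈ t, X k A • v k‖^2)) := by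
          apply Finset.sum_le_sum
          intro A _
          have hh := mul_le_mul_of_nonneg_left (hsplit A) (hP0 A)
          linarith only [hh]
      _ = 2 * (∑ A : Finset (Fin K), P A * ((X y A)^2 * ‖v y‖^2))
          + 2 * (∑ A : Finset (Fin K), P A * ‖∑ k ∈ t, X k A • v k‖^2) := by
          rw [Finset.sum_add_distrib, ← Finset.mul_sum, ← Finset.mul_sum]
      _ ≤ 2 * L^2 + 2 * ((d:ℝ) * L^2) := by
          linarith only [hfirst, hQle]
      _ = 2 * (1 + (d:ℝ)) * L^2 := by ring
  -- scaling factor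
  have hdiff : 0 < γ - ζ := diff_pos hε hK hd1 hd2
  have hinv : 1 / (γ - ζ) ≤ 3 * (E + (K:ℝ) / (d:ℝ)) / (E - 1) :=
    inv_diff_le hε hK hd1 hd2 hd3
  have hinv0 : 0 < 1 / (γ - ζ) := by positivity
  have hsq : (1 / (γ - ζ))^2 ≤ (3 * (E + (K:ℝ) / (d:ℝ)) / (E - 1))^2 := by
    apply pow_le_pow_left₀ hinv0.le hinv
  -- final assembly
  have hLHS : ∑ A : Finset (Fin K), P A *
      ‖(1 / (γ - ζ)) • ∑ k : Fin K, ((if k ∈ A then (1:ℝ) else 0) - ζ) • v k‖^2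
      = (1 / (γ - ζ))^2 * ∑ A : Finset (Fin K),
          P A * ‖∑ k : Fin K, ((if k ∈ A then (1:ℝ) else 0) - ζ) • v k‖^2 := by
    rw [Finset.mul_sum]
    refine Finset.sum_congr rfl fun A _ => ?_
    rw [norm_smul, mul_pow, Real.norm_eq_abs, sq_abs]
    ring
  rw [hLHS]
  have hmid0 : 0 ≤ ∑ A : Finset (Fin K),
      P A * ‖∑ k : Fin K, ((if k ∈ A then (1:ℝ) else 0) - ζ) • v k‖^2 := by
    apply Finset.sum_nonneg
    intro A _
    exact mul_nonneg (hP0 A) (by positivity)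
  calc (1 / (γ - ζ))^2 * ∑ A : Finset (Fin K),
        P A * ‖∑ k : Fin K, ((if k ∈ A then (1:ℝ) else 0) - ζ) • v k‖^2
      ≤ (3 * (E + (K:ℝ) / (d:ℝ)) / (E - 1))^2 * (2 * (1 + (d:ℝ)) * L^2) := by
        apply mul_le_mul hsq hmid hmid0 (by positivity)
    _ = 18 * (E + (K:ℝ) / (d:ℝ))^2 * (1 + (d:ℝ)) * L^2 / (E - 1)^2 := by
        rw [div_pow, div_mul_eq_mul_div]
        congr 1
        ring
end

section
/- There exists an absolute constant C > 0 such that the following holds. Let K ≥ 2 be an integer, let 0 < ε ≤ ln K, and set d = ⌈K/(2e^ε)⌉. Let y ∈ [K], L ≥ 0, and let v_1, …, v_K be vectors in a real inner product space with ‖v_k‖ ≤ L for all k. Let S be drawn from the d-subset selection distribution with true label y, and let ĝ = (1/(γ_d − ζ_d)) · Σ_{k ∈ [K]} (1{k ∈ S} − ζ_d) · v_k, where γ_d = d e^ε/(d e^ε + K − d) and ζ_d = (d − γ_d)/(K − 1). Then E[‖ĝ‖²] ≤ C · e^ε(e^ε + K) · L² / (e^ε − 1)². -/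
open Finset

universe u

section Aux

variable {ι : Type*} [DecidableEq ι]

lemma nat_choose_id (n m : ℕ) (h1 : 1 ≤ m) (h2 : m ≤ n) :
    n * (n - 1).choose (m - 1) = n.choose m * m := by
  obtain ⟨n', rfl⟩ : ∃ n', n = n' + 1 := ⟨n - 1, by omega⟩
  obtain ⟨m', rfl⟩ : ∃ m', m = m' + 1 := ⟨m - 1, by omega⟩
  simpa using Nat.add_one_mul_choose_eq n' m'

lemma sum_powersetCard_filter_mem {M : Type*} [AddCommMonoid M]
    (s : Finset ι) (m : ℕ) (k : ι) (hk : k ∈ s) (hm : 1 ≤ m)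
    (f : Finset ι → M) :
    ∑ B ∈ (s.powersetCard m).filter (fun B => k ∈ B), f B
      = ∑ B ∈ (s.erase k).powersetCard (m - 1), f (insert k B) := by
  refine Finset.sum_nbij' (fun B => B.erase k) (fun B => insert k B) ?_ ?_ ?_ ?_ ?_
  · intro B hB
    simp only [mem_filter, mem_powersetCard] at hB ⊢
    obtain ⟨⟨hBs, hBc⟩, hkB⟩ := hB
    exact ⟨erase_subset_erase _ hBs, by rw [card_erase_of_mem hkB, hBc]⟩
  · intro B hB
    simp only [mem_filter, mem_powersetCard, mem_erase] at hB ⊢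
    obtain ⟨hBs, hBc⟩ := hB
    have hkB : k ∉ B := fun h => (mem_erase.1 (hBs h)).1 rfl
    constructor
    · constructor
      · intro x hx
        rcases mem_insert.1 hx with h | h
        · exact h ▸ hk
        · exact (erase_subset _ _) (hBs h)
      · rw [card_insert_of_notMem hkB, hBc]; omega
    · exact mem_insert_self _ _
  · intro B hB
    simp only [mem_filter] at hB
    exact insert_erase hB.2
  · intro B hB
    simp only [mem_powersetCard] at hB
    have hkB : k ∉ B := fun h => (mem_erase.1 (hB.1 h)).1 rfl
    exact erase_insert hkB
  · intro B hB
    simp only [mem_filter] at hB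
    rw [insert_erase hB.2]

lemma card_powersetCard_filter_mem (s : Finset ι) (m : ℕ) (k : ι) (hk : k ∈ s) (hm : 1 ≤ m) :
    ((s.powersetCard m).filter (fun B => k ∈ B)).card = (s.card - 1).choose (m - 1) := by
  rw [card_eq_sum_ones, sum_powersetCard_filter_mem s m k hk hm, ← card_eq_sum_ones,
    card_powersetCard, card_erase_of_mem hk]

lemma card_powersetCard_filter_pair (s : Finset ι) (m : ℕ) (j k : ι) (hj : j ∈ s) (hk : k ∈ s)
    (hjk : j ≠ k) (hm : 1 ≤ m) :
    ((s.powersetCard m).filter (fun B => j ∈ B ∧ k ∈ B)).card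
      = if 2 ≤ m then (s.card - 2).choose (m - 2) else 0 := by
  have h1 : ((s.powersetCard m).filter (fun B => j ∈ B ∧ k ∈ B))
      = ((s.powersetCard m).filter (fun B => j ∈ B)).filter (fun B => k ∈ B) := by
    rw [filter_filter]
  rw [h1, card_eq_sum_ones, sum_filter, sum_powersetCard_filter_mem s m j hj hm]
  have h2 : ∀ B ∈ (s.erase j).powersetCard (m-1),
      (if k ∈ insert j B then (1:ℕ) else 0) = (if k ∈ B then 1 else 0) := by
    intro B _; simp [mem_insert, hjk.symm]
  rw [sum_congr rfl h2, ← sum_filter, ← card_eq_sum_ones]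
  rcases le_or_gt 2 m with h | h
  · have hks : k ∈ s.erase j := mem_erase.2 ⟨fun h => hjk (h ▸ rfl), hk⟩
    rw [card_powersetCard_filter_mem _ _ _ hks (by omega), if_pos h,
      card_erase_of_mem hj]
    congr 1 <;> omega
  · have hm1 : m = 1 := by omega
    subst hm1
    rw [if_neg (by omega)]
    simp only [Nat.sub_self, powersetCard_zero]
    rw [card_eq_zero, filter_eq_empty_iff]
    intro B hB; rw [mem_singleton] at hB; subst hB; simp

lemma unif_var_bound {V : Type u} [NormedAddCommGroup V] [InnerProductSpace ℝ V]
    (s : Finset ι) (m : ℕ) (hm : m ≤ s.card) (v : ι → V) (L : ℝ) (hL : 0 ≤ L)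
    (hv : ∀ k, ‖v k‖ ≤ L) :
    ∑ B ∈ s.powersetCard m, ‖(s.card : ℝ) • (∑ k ∈ B, v k) - (m : ℝ) • ∑ k ∈ s, v k‖ ^ 2
      ≤ (s.card.choose m : ℝ) * m * (s.card : ℝ) ^ 2 * L ^ 2 := by
  rcases Nat.eq_zero_or_pos m with hm0 | hm1
  · subst hm0; rw [powersetCard_zero]; simp
  set n := s.card with hn
  have hn1 : 1 ≤ n := le_trans hm1 hm
  set N := n.choose m with hN
  set a := (n - 1).choose (m - 1) with ha
  set b := (if 2 ≤ m then (n - 2).choose (m - 2) else 0) with hb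
  set T := ∑ k ∈ s, v k with hT
  set Sd := ∑ k ∈ s, ‖v k‖ ^ 2 with hSd
  set OffD := ∑ j ∈ s, ∑ k ∈ s.erase j, (inner ℝ (v j) (v k) : ℝ) with hOffD
  have hanN : n * a = N * m := nat_choose_id n m hm1 hm
  have hba2 : 2 ≤ m → b * (n - 1) = a * (m - 1) := by
    intro h2
    have hn2 : 2 ≤ n := h2.trans hm
    have h := nat_choose_id (n - 1) (m - 1) (by omega) (by omega)
    have e1 : n - 1 - 1 = n - 2 := by omega
    have e2 : m - 1 - 1 = m - 2 := by omega
    rw [e1, e2] at h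
    rw [hb, if_pos h2, ha, mul_comm]
    exact h
  have hba : b ≤ a := by
    rcases le_or_gt 2 m with h2 | h2
    · have hk := hba2 h2
      have hn2 : 2 ≤ n := h2.trans hm
      have h : b * (n - 1) ≤ a * (n - 1) := by
        rw [hk]; exact Nat.mul_le_mul_left a (by omega)
      exact Nat.le_of_mul_le_mul_right h (by omega)
    · rw [hb, if_neg (by omega)]; exact Nat.zero_le _
  have hbnam : b * n ≤ a * m := by
    rcases le_or_gt 2 m with h2 | h2
    · have hk := hba2 h2
      calc b * n = b * (n - 1 + 1) := by congr 1; omega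
        _ = b * (n - 1) + b := by rw [Nat.mul_succ]
        _ = a * (m - 1) + b := by rw [hk]
        _ ≤ a * (m - 1) + a := by omega
        _ = a * (m - 1 + 1) := by rw [Nat.mul_succ]
        _ = a * m := by congr 1; omega
    · rw [hb, if_neg (by omega)]; simp
  have F1 : ∑ B ∈ s.powersetCard m, (∑ k ∈ B, v k) = a • T := by
    have h1 : ∀ B ∈ s.powersetCard m, ∑ k ∈ B, v k = ∑ k ∈ s, if k ∈ B then v k else 0 := by
      intro B hB
      rw [sum_ite_mem, inter_eq_right.2 (mem_powersetCard.1 hB).1]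
    rw [sum_congr rfl h1, Finset.sum_comm, hT, smul_sum]
    refine sum_congr rfl fun k hk => ?_
    rw [← sum_filter, sum_const, card_powersetCard_filter_mem s m k hk hm1]
  have Hswap : ∑ B ∈ s.powersetCard m, ‖∑ k ∈ B, v k‖ ^ 2
      = ∑ j ∈ s, ∑ k ∈ s,
          (((s.powersetCard m).filter (fun B => j ∈ B ∧ k ∈ B)).card : ℝ) *
            (inner ℝ (v j) (v k) : ℝ) := by
    have h1 : ∀ B ∈ s.powersetCard m, ‖∑ k ∈ B, v k‖ ^ 2
        = ∑ j ∈ s, ∑ k ∈ s, if j ∈ B ∧ k ∈ B then (inner ℝ (v j) (v k) : ℝ) else 0 := by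
      intro B hB
      have hBs : B ⊆ s := (mem_powersetCard.1 hB).1
      rw [← real_inner_self_eq_norm_sq, sum_inner]
      have h2 : ∀ j ∈ B, (inner ℝ (v j) (∑ k ∈ B, v k) : ℝ)
          = ∑ k ∈ s, if k ∈ B then (inner ℝ (v j) (v k) : ℝ) else 0 := by
        intro j _
        rw [inner_sum, sum_ite_mem, inter_eq_right.2 hBs]
      rw [sum_congr rfl h2]
      rw [show (∑ j ∈ B, ∑ k ∈ s, if k ∈ B then (inner ℝ (v j) (v k) : ℝ) else 0)
          = ∑ j ∈ s, if j ∈ B then (∑ k ∈ s, if k ∈ B then (inner ℝ (v j) (v k) : ℝ) else 0) else 0 by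
        rw [sum_ite_mem, inter_eq_right.2 hBs]]
      refine sum_congr rfl fun j _ => ?_
      by_cases hj : j ∈ B
      · simp only [hj, if_true, true_and]
      · simp [hj]
    rw [sum_congr rfl h1, Finset.sum_comm]
    refine sum_congr rfl fun j _ => ?_
    rw [Finset.sum_comm]
    refine sum_congr rfl fun k _ => ?_
    rw [← sum_filter, sum_const, nsmul_eq_mul]
  have F2 : ∑ B ∈ s.powersetCard m, ‖∑ k ∈ B, v k‖ ^ 2 = (a : ℝ) * Sd + (b : ℝ) * OffD := by
    rw [Hswap]
    have hsplit : ∀ j ∈ s, (∑ k ∈ s,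
        (((s.powersetCard m).filter (fun B => j ∈ B ∧ k ∈ B)).card : ℝ) * (inner ℝ (v j) (v k) : ℝ))
        = (a : ℝ) * ‖v j‖ ^ 2 + (b : ℝ) * ∑ k ∈ s.erase j, (inner ℝ (v j) (v k) : ℝ) := by
      intro j hj
      rw [← Finset.add_sum_erase _ _ hj]
      congr 1
      · have he : ((s.powersetCard m).filter (fun B => j ∈ B ∧ j ∈ B))
            = ((s.powersetCard m).filter (fun B => j ∈ B)) := by
          simp only [and_self]
        rw [he, card_powersetCard_filter_mem s m j hj hm1, real_inner_self_eq_norm_sq]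
      · rw [mul_sum]
        refine sum_congr rfl fun k hk => ?_
        have hkj : j ≠ k := fun h => (mem_erase.1 hk).1 h.symm
        rw [card_powersetCard_filter_pair s m j k hj (mem_of_mem_erase hk) hkj hm1]
    rw [sum_congr rfl hsplit, sum_add_distrib, ← mul_sum, ← mul_sum]
  have HT : ‖T‖ ^ 2 = Sd + OffD := by
    rw [← real_inner_self_eq_norm_sq, hT, sum_inner]
    have h2 : ∀ j ∈ s, (inner ℝ (v j) (∑ k ∈ s, v k) : ℝ) = ∑ k ∈ s, (inner ℝ (v j) (v k) : ℝ) := by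
      intro j _; rw [inner_sum]
    rw [sum_congr rfl h2]
    have h3 : ∀ j ∈ s, (∑ k ∈ s, (inner ℝ (v j) (v k) : ℝ))
        = ‖v j‖ ^ 2 + ∑ k ∈ s.erase j, (inner ℝ (v j) (v k) : ℝ) := by
      intro j hj
      rw [← Finset.add_sum_erase _ _ hj, real_inner_self_eq_norm_sq]
    rw [sum_congr rfl h3, sum_add_distrib]
  have Hnorm : ∀ B ∈ s.powersetCard m,
      ‖(n : ℝ) • (∑ k ∈ B, v k) - (m : ℝ) • T‖ ^ 2
        = (n : ℝ)^2 * ‖∑ k ∈ B, v k‖^2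
          - 2*(n : ℝ)*(m : ℝ)*(inner ℝ (∑ k ∈ B, v k) T : ℝ) + (m : ℝ)^2*‖T‖^2 := by
    intro B _
    rw [norm_sub_sq_real, norm_smul, norm_smul, real_inner_smul_left, real_inner_smul_right]
    rw [Real.norm_eq_abs, Real.norm_eq_abs, mul_pow, mul_pow, sq_abs, sq_abs]
    ring
  have Htot : ∑ B ∈ s.powersetCard m, ‖(n : ℝ) • (∑ k ∈ B, v k) - (m : ℝ) • T‖ ^ 2
      = (n : ℝ)^2 * ((a : ℝ) * Sd + (b : ℝ) * OffD)
        - 2*(n : ℝ)*(m : ℝ)*((a : ℝ) * (Sd + OffD)) + (N : ℝ)*(m : ℝ)^2*(Sd + OffD) := by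
    rw [sum_congr rfl Hnorm, sum_add_distrib, sum_sub_distrib, ← mul_sum, ← mul_sum, F2]
    rw [← sum_inner, F1, sum_const, card_powersetCard, ← hn, ← hN, nsmul_eq_mul]
    have : (inner ℝ (a • T) T : ℝ) = (a : ℝ) * (Sd + OffD) := by
      rw [← Nat.cast_smul_eq_nsmul ℝ, real_inner_smul_left, real_inner_self_eq_norm_sq, HT]
    rw [this, ← HT]
    ring
  rw [Htot]
  have hanN' : (n : ℝ) * a = (N : ℝ) * m := by exact_mod_cast congrArg Nat.cast hanN
  have hbnam' : (b : ℝ) * n ≤ (a : ℝ) * m := by exact_mod_cast hbnam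
  have hba' : (b : ℝ) ≤ a := by exact_mod_cast hba
  have hmn' : (m : ℝ) ≤ n := by exact_mod_cast hm
  have hSd0 : 0 ≤ Sd := sum_nonneg fun k _ => sq_nonneg _
  have hSdL : Sd ≤ (n : ℝ) * L ^ 2 := by
    calc Sd ≤ ∑ _k ∈ s, L ^ 2 := sum_le_sum fun k _ =>
          pow_le_pow_left₀ (norm_nonneg _) (hv k) 2
      _ = (n : ℝ) * L ^ 2 := by rw [sum_const, ← hn, nsmul_eq_mul]
  have hTT : 0 ≤ Sd + OffD := HT ▸ sq_nonneg ‖T‖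
  have hn0 : (0 : ℝ) ≤ n := Nat.cast_nonneg n
  have hm0 : (0 : ℝ) ≤ m := Nat.cast_nonneg m
  have ha0 : (0 : ℝ) ≤ a := Nat.cast_nonneg a
  have hb0 : (0 : ℝ) ≤ b := Nat.cast_nonneg b
  have hL2 : (0 : ℝ) ≤ L ^ 2 := sq_nonneg L
  have h5 : ((n : ℝ) * a - (N : ℝ) * m) * ((m : ℝ) * (Sd + OffD)) = 0 := by
    rw [hanN', sub_self, zero_mul]
  have h6 : ((n : ℝ) * a - (N : ℝ) * m) * ((n : ℝ) ^ 2 * L ^ 2) = 0 := by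
    rw [hanN', sub_self, zero_mul]
  nlinarith [h5, h6, mul_nonneg (mul_nonneg (mul_nonneg ha0 hn0) (sub_nonneg.2 hmn'))
      (sub_nonneg.2 hSdL),
    mul_nonneg (mul_nonneg hn0 (sub_nonneg.2 hbnam')) hTT,
    mul_nonneg (mul_nonneg hn0 (sub_nonneg.2 hbnam')) (sub_nonneg.2 hSdL),
    mul_nonneg (mul_nonneg (mul_nonneg (mul_nonneg hn0 hn0) hn0) hb0) hL2]

end Aux

section Aux2

variable {V : Type u} [NormedAddCommGroup V] [InnerProductSpace ℝ V]

lemma Xdecomp {K : ℕ} (y : Fin K) (A : Finset (Fin K)) (zt : ℝ) (v : Fin K → V) :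
    ∑ k : Fin K, ((if k ∈ A then (1:ℝ) else 0) - zt) • v k
      = ((if y ∈ A then (1:ℝ) else 0) - zt) • v y
        + ((∑ k ∈ A.erase y, v k) - zt • ∑ k ∈ univ.erase y, v k) := by
  have h0 : ∑ k : Fin K, ((if k ∈ A then (1:ℝ) else 0) - zt) • v k
      = ((if y ∈ A then (1:ℝ) else 0) - zt) • v y
        + ∑ k ∈ univ.erase y, ((if k ∈ A then (1:ℝ) else 0) - zt) • v k :=
    (Finset.add_sum_erase univ _ (mem_univ y)).symm
  rw [h0]
  congr 1
  have h1 : ∀ k ∈ univ.erase y, ((if k ∈ A then (1:ℝ) else 0) - zt) • v k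
      = (if k ∈ A then v k else 0) - zt • v k := by
    intro k _
    rw [sub_smul, ite_smul, one_smul, zero_smul]
  have h2 : univ.erase y ∩ A = A.erase y := by
    ext k
    simp only [mem_inter, mem_erase, mem_univ, true_and, and_comm]
  rw [sum_congr rfl h1, sum_sub_distrib, sum_ite_mem, ← smul_sum, h2]

lemma filter_not_mem_powersetCard {K : ℕ} (y : Fin K) (d : ℕ) :
    (powersetCard d (univ : Finset (Fin K))).filter (fun A => ¬ y ∈ A)
      = powersetCard d (univ.erase y) := by
  ext A
  simp only [mem_filter, mem_powersetCard, subset_erase, subset_univ, true_and]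
  tauto

lemma pointwise_bound {K : ℕ} (hK : 2 ≤ K) (y : Fin K) (v : Fin K → V) (L : ℝ) (hL : 0 ≤ L)
    (hv : ∀ k, ‖v k‖ ≤ L) (zt u : ℝ) (B : Finset (Fin K))
    (hu : |u| ≤ 1) (hw : |(B.card : ℝ) - ((K : ℝ) - 1) * zt| ≤ 1) :
    ‖u • v y + ((∑ k ∈ B, v k) - zt • ∑ k ∈ univ.erase y, v k)‖ ^ 2
      ≤ 8 * L ^ 2 + 2 * (((K : ℝ) - 1)⁻¹) ^ 2 *
          ‖((K : ℝ) - 1) • (∑ k ∈ B, v k) - (B.card : ℝ) • ∑ k ∈ univ.erase y, v k‖ ^ 2 := by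
  have hK1 : (0 : ℝ) < (K : ℝ) - 1 := by
    have : (2 : ℝ) ≤ K := by exact_mod_cast hK
    linarith
  have hK1' : ((K : ℝ) - 1) ≠ 0 := ne_of_gt hK1
  set S := ∑ k ∈ B, v k with hS
  set T' := ∑ k ∈ univ.erase y, v k with hT'
  set m : ℝ := (B.card : ℝ) with hm
  set Q := ‖((K : ℝ) - 1) • S - m • T'‖ with hQ
  have hT'norm : ‖T'‖ ≤ ((K : ℝ) - 1) * L := by
    calc ‖T'‖ ≤ ∑ k ∈ univ.erase y, ‖v k‖ := norm_sum_le _ _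
      _ ≤ ∑ _k ∈ univ.erase y, L := sum_le_sum fun k _ => hv k
      _ = ((K : ℝ) - 1) * L := by
          rw [sum_const, nsmul_eq_mul, card_erase_of_mem (mem_univ y), card_univ,
            Fintype.card_fin]
          have h : ((K - 1 : ℕ) : ℝ) = (K : ℝ) - 1 := by
            have h1 : 1 ≤ K := by omega
            push_cast [h1]; ring
          rw [h]
  have hdec : S - zt • T'
      = ((K : ℝ) - 1)⁻¹ • (((K : ℝ) - 1) • S - m • T') + (m / ((K : ℝ) - 1) - zt) • T' := by
    rw [smul_sub, smul_smul, smul_smul, inv_mul_cancel₀ hK1', one_smul, sub_smul, div_eq_inv_mul]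
    abel
  have h1 : ‖u • v y‖ ≤ L := by
    rw [norm_smul, Real.norm_eq_abs]
    calc |u| * ‖v y‖ ≤ 1 * L := by
          apply mul_le_mul hu (hv y) (norm_nonneg _) zero_le_one
      _ = L := one_mul L
  have h2 : ‖((K : ℝ) - 1)⁻¹ • (((K : ℝ) - 1) • S - m • T')‖ = ((K : ℝ) - 1)⁻¹ * Q := by
    rw [norm_smul, Real.norm_eq_abs, abs_of_pos (inv_pos.2 hK1)]
  have h3 : ‖(m / ((K : ℝ) - 1) - zt) • T'‖ ≤ L := by
    rw [norm_smul, Real.norm_eq_abs]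
    have he : m / ((K : ℝ) - 1) - zt = (m - ((K : ℝ) - 1) * zt) / ((K : ℝ) - 1) := by
      field_simp
    rw [he, abs_div, abs_of_pos hK1]
    calc |m - ((K : ℝ) - 1) * zt| / ((K : ℝ) - 1) * ‖T'‖
        ≤ 1 / ((K : ℝ) - 1) * (((K : ℝ) - 1) * L) := by
          apply mul_le_mul _ hT'norm (norm_nonneg _) _
          · apply div_le_div_of_nonneg_right hw (le_of_lt hK1) |>.trans_eq rfl
          · positivity
      _ = L := by field_simp
  have hsum : ‖u • v y + (S - zt • T')‖ ≤ 2 * L + ((K : ℝ) - 1)⁻¹ * Q := by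
    calc ‖u • v y + (S - zt • T')‖ ≤ ‖u • v y‖ + ‖S - zt • T'‖ := norm_add_le _ _
      _ ≤ L + (((K : ℝ) - 1)⁻¹ * Q + L) := by
          apply add_le_add h1
          rw [hdec]
          calc ‖_ + _‖ ≤ ‖_‖ + ‖_‖ := norm_add_le _ _
            _ ≤ ((K : ℝ) - 1)⁻¹ * Q + L := by rw [h2]; exact add_le_add le_rfl h3
      _ = 2 * L + ((K : ℝ) - 1)⁻¹ * Q := by ring
  have hQ0 : 0 ≤ ((K : ℝ) - 1)⁻¹ * Q := by positivity
  have hn0 : (0 : ℝ) ≤ ‖u • v y + (S - zt • T')‖ := norm_nonneg _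
  nlinarith [sq_nonneg (2 * L - ((K : ℝ) - 1)⁻¹ * Q), sq_nonneg (((K : ℝ) - 1)⁻¹ * Q),
    mul_self_nonneg Q]

end Aux2

set_option maxHeartbeats 1000000 in
theorem stmt_17 : ∃ C : ℝ, 0 < C ∧
    ∀ (K : ℕ), 2 ≤ K → ∀ ε : ℝ, 0 < ε → ε ≤ Real.log K →
    ∀ d : ℕ, d = ⌈(K : ℝ) / (2 * Real.exp ε)⌉₊ →
    ∀ (V : Type u) [NormedAddCommGroup V] [InnerProductSpace ℝ V],
    ∀ (y : Fin K) (L : ℝ), 0 ≤ L → ∀ v : Fin K → V, (∀ k, ‖v k‖ ≤ L) →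
    (∑ A : Finset (Fin K), dSubsetProb ε K d y A *
        ‖(1 / (gammaD ε K d - zetaD ε K d)) •
            ∑ k : Fin K, ((if k ∈ A then (1 : ℝ) else 0) - zetaD ε K d) • v k‖ ^ 2)
      ≤ C * Real.exp ε * (Real.exp ε + K) * L ^ 2 / (Real.exp ε - 1) ^ 2 := by
  refine ⟨360, by norm_num, ?_⟩
  intro K hK ε hε hεK d hd V _ _ y L hL v hv
  have hKR : (2 : ℝ) ≤ (K : ℝ) := by exact_mod_cast hK
  have hK0 : (0 : ℝ) < K := by linarith
  set e := Real.exp ε with he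
  have he0 : (0 : ℝ) < e := Real.exp_pos ε
  have he1 : 1 < e := by
    rw [he, show (1:ℝ) = Real.exp 0 from (Real.exp_zero).symm]
    exact Real.exp_lt_exp.2 hε
  have heK : e ≤ K := by
    rw [he, ← Real.exp_log hK0]
    exact Real.exp_le_exp.2 hεK
  -- d facts
  have hd1 : 1 ≤ d := by
    rw [hd]
    have : 0 < ⌈(K : ℝ) / (2 * e)⌉₊ := Nat.ceil_pos.mpr (by positivity)
    omega
  have hdlo : (K : ℝ) / (2 * e) ≤ d := by rw [hd]; exact Nat.le_ceil _
  have hdhi : (d : ℝ) ≤ (K : ℝ) / (2 * e) + 1 := by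
    rw [hd]; exact le_of_lt (Nat.ceil_lt_add_one (by positivity))
  have hcastK : ((K - 1 : ℕ) : ℝ) = (K : ℝ) - 1 := by
    have h1 : 1 ≤ K := by omega
    push_cast [h1]; ring
  have hdK : d ≤ K - 1 := by
    rw [hd]; apply Nat.ceil_le.2
    rw [hcastK, div_le_iff₀ (by positivity)]
    nlinarith
  have hdKr : (d : ℝ) ≤ (K : ℝ) - 1 := by
    rw [← hcastK]; exact_mod_cast hdK
  have h2d : 2 * d ≤ K + 1 := by
    have h1 : (K : ℝ) ≤ ((K + 1) / 2 : ℕ) * 2 := by exact_mod_cast (by omega : K ≤ (K+1)/2*2)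
    have h2 : d ≤ (K + 1) / 2 := by
      rw [hd]; apply Nat.ceil_le.2
      rw [div_le_iff₀ (by positivity)]
      nlinarith [(Nat.cast_nonneg ((K+1)/2) : (0:ℝ) ≤ ((K+1)/2 : ℕ))]
    omega
  have hdR : (1 : ℝ) ≤ d := by exact_mod_cast hd1
  -- gamma / zeta facts
  set gm := gammaD ε K d with hgm
  set zt := zetaD ε K d with hzt
  set den : ℝ := (d : ℝ) * e + K - d with hden
  have hden0 : (0 : ℝ) < den := by
    have : (d : ℝ) ≤ d * e := by nlinarith [(Nat.cast_nonneg d : (0:ℝ) ≤ (d:ℕ))]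
    rw [hden]; linarith
  have hgme : gm = (d : ℝ) * e / den := rfl
  have hgm0 : 0 ≤ gm := by rw [hgme]; positivity
  have hgm1 : gm ≤ 1 := by
    rw [hgme, div_le_one hden0, hden]
    linarith
  have hzte : zt = ((d : ℝ) - gm) / ((K : ℝ) - 1) := rfl
  have hK1 : (0 : ℝ) < (K : ℝ) - 1 := by linarith
  have hzt0 : 0 ≤ zt := by
    rw [hzte]
    apply div_nonneg _ (le_of_lt hK1)
    linarith
  have hzt1 : zt ≤ 1 := by
    rw [hzte, div_le_one hK1]
    linarith
  have hztK : ((K : ℝ) - 1) * zt = (d : ℝ) - gm := by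
    rw [hzte, mul_div_cancel₀]
    exact ne_of_gt hK1
  have hdiff : gm - zt = (d : ℝ) * ((K : ℝ) - d) * (e - 1) / (((K : ℝ) - 1) * den) := by
    rw [hzte, hgme]
    field_simp
    ring
  have hdiffpos : 0 < gm - zt := by
    rw [hdiff]
    apply div_pos _ (by positivity)
    have h1 : (0:ℝ) < (K : ℝ) - d := by linarith
    have h2 : (0:ℝ) < d := by linarith
    have h3 : (0:ℝ) < e - 1 := by linarith
    exact mul_pos (mul_pos h2 h1) h3
  -- D
  set C1 : ℝ := ((K - 1).choose (d - 1) : ℝ) with hC1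
  set C2 : ℝ := ((K - 1).choose d : ℝ) with hC2
  set D : ℝ := e * C1 + C2 with hD
  have hC1pos : 0 < C1 := by
    rw [hC1]
    exact_mod_cast Nat.choose_pos (by omega : d - 1 ≤ K - 1)
  have hC2pos : 0 < C2 := by
    rw [hC2]
    exact_mod_cast Nat.choose_pos hdK
  have hD0 : 0 < D := by rw [hD]; positivity
  -- reduce to powersetCard
  set iv : ℝ := 1 / (gm - zt) with hiv
  have hiv0 : 0 < iv := by rw [hiv]; positivity
  set T' := ∑ k ∈ (univ : Finset (Fin K)).erase y, v k with hT'
  have hcardE : ((univ : Finset (Fin K)).erase y).card = K - 1 := by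
    rw [card_erase_of_mem (mem_univ y), card_univ, Fintype.card_fin]
  -- variance sums
  have Hvar : ∀ m : ℕ, m ≤ K - 1 →
      ∑ B ∈ ((univ : Finset (Fin K)).erase y).powersetCard m,
        ‖((K : ℝ) - 1) • (∑ k ∈ B, v k) - (m : ℝ) • T'‖ ^ 2
      ≤ ((K - 1).choose m : ℝ) * m * ((K : ℝ) - 1) ^ 2 * L ^ 2 := by
    intro m hm
    have h := unif_var_bound ((univ : Finset (Fin K)).erase y) m (by rw [hcardE]; exact hm)
      v L hL hv
    rw [hcardE, hcastK] at h
    exact h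
  -- pointwise bound, applied
  have Hpt : ∀ (A : Finset (Fin K)) (u : ℝ), |u| ≤ 1 →
      |((A.erase y).card : ℝ) - ((K : ℝ) - 1) * zt| ≤ 1 →
      ‖u • v y + ((∑ k ∈ A.erase y, v k) - zt • T')‖ ^ 2
        ≤ 8 * L ^ 2 + 2 * (((K : ℝ) - 1)⁻¹) ^ 2 *
            ‖((K : ℝ) - 1) • (∑ k ∈ A.erase y, v k) - (((A.erase y).card : ℕ) : ℝ) • T'‖ ^ 2 :=
    fun A u hu hw => pointwise_bound hK y v L hL hv zt u (A.erase y) hu hw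
    -- support restriction
  have hzero : ∀ A ∈ (univ : Finset (Finset (Fin K))),
      A ∉ powersetCard d (univ : Finset (Fin K)) →
      dSubsetProb ε K d y A *
        ‖iv • ∑ k : Fin K, ((if k ∈ A then (1:ℝ) else 0) - zt) • v k‖ ^ 2 = 0 := by
    intro A _ hA
    have hAc : A.card ≠ d := by
      intro h
      exact hA (mem_powersetCard_univ.2 h)
    rw [dSubsetProb, if_neg hAc, zero_mul]
  -- the two parts
  have key1 : ∑ A ∈ (powersetCard d (univ : Finset (Fin K))).filter (fun A => y ∈ A),
      dSubsetProb ε K d y A *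
        ‖iv • ∑ k : Fin K, ((if k ∈ A then (1:ℝ) else 0) - zt) • v k‖ ^ 2
      ≤ e * C1 / D * (iv ^ 2 * (10 * d * L ^ 2)) := by
    rw [sum_powersetCard_filter_mem (univ : Finset (Fin K)) d y (mem_univ y) hd1]
    have hstep : ∀ B ∈ ((univ : Finset (Fin K)).erase y).powersetCard (d - 1),
        dSubsetProb ε K d y (insert y B) *
          ‖iv • ∑ k : Fin K, ((if k ∈ insert y B then (1:ℝ) else 0) - zt) • v k‖ ^ 2
        ≤ e / D * (iv ^ 2 * (8 * L ^ 2 + 2 * (((K : ℝ) - 1)⁻¹) ^ 2 *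
            ‖((K : ℝ) - 1) • (∑ k ∈ B, v k) - ((d - 1 : ℕ) : ℝ) • T'‖ ^ 2)) := by
      intro B hB
      obtain ⟨hBs, hBc⟩ := mem_powersetCard.1 hB
      have hyB : y ∉ B := fun h => (mem_erase.1 (hBs h)).1 rfl
      have hcard : (insert y B).card = d := by
        rw [card_insert_of_notMem hyB, hBc]; omega
      have hprob : dSubsetProb ε K d y (insert y B) = e / D := by
        rw [dSubsetProb, if_pos hcard, if_pos (mem_insert_self y B)]
      rw [hprob, Xdecomp y (insert y B) zt v, erase_insert hyB,
        norm_smul, Real.norm_eq_abs, abs_of_pos hiv0, mul_pow]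
      apply mul_le_mul_of_nonneg_left _ (le_of_lt (div_pos he0 hD0))
      apply mul_le_mul_of_nonneg_left _ (sq_nonneg iv)
      have hu : |(if y ∈ insert y B then (1:ℝ) else 0) - zt| ≤ 1 := by
        rw [if_pos (mem_insert_self y B), abs_le]
        constructor <;> linarith
      have hw : |(((insert y B).erase y).card : ℝ) - ((K : ℝ) - 1) * zt| ≤ 1 := by
        rw [erase_insert hyB, hBc, hztK]
        have hcd : ((d - 1 : ℕ) : ℝ) = (d : ℝ) - 1 := by push_cast [hd1]; ring
        rw [hcd, abs_le]
        constructor <;> linarith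
      have h := Hpt (insert y B) _ hu hw
      rw [erase_insert hyB, hBc] at h
      exact h
    calc ∑ B ∈ ((univ : Finset (Fin K)).erase y).powersetCard (d - 1),
        dSubsetProb ε K d y (insert y B) *
          ‖iv • ∑ k : Fin K, ((if k ∈ insert y B then (1:ℝ) else 0) - zt) • v k‖ ^ 2
        ≤ ∑ B ∈ ((univ : Finset (Fin K)).erase y).powersetCard (d - 1),
          e / D * (iv ^ 2 * (8 * L ^ 2 + 2 * (((K : ℝ) - 1)⁻¹) ^ 2 *
            ‖((K : ℝ) - 1) • (∑ k ∈ B, v k) - ((d - 1 : ℕ) : ℝ) • T'‖ ^ 2)) :=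
          sum_le_sum hstep
      _ = e / D * (iv ^ 2 * (C1 * (8 * L ^ 2) + 2 * (((K : ℝ) - 1)⁻¹) ^ 2 *
            ∑ B ∈ ((univ : Finset (Fin K)).erase y).powersetCard (d - 1),
              ‖((K : ℝ) - 1) • (∑ k ∈ B, v k) - ((d - 1 : ℕ) : ℝ) • T'‖ ^ 2)) := by
          rw [← mul_sum, ← mul_sum, sum_add_distrib, sum_const, card_powersetCard, hcardE,
            nsmul_eq_mul, ← mul_sum]
      _ ≤ e / D * (iv ^ 2 * (C1 * (8 * L ^ 2) + 2 * (((K : ℝ) - 1)⁻¹) ^ 2 *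
            (C1 * ((d - 1 : ℕ) : ℝ) * ((K : ℝ) - 1) ^ 2 * L ^ 2))) := by
          apply mul_le_mul_of_nonneg_left _ (le_of_lt (div_pos he0 hD0))
          apply mul_le_mul_of_nonneg_left _ (sq_nonneg iv)
          apply add_le_add le_rfl
          exact mul_le_mul_of_nonneg_left (Hvar (d - 1) (by omega)) (by positivity)
      _ ≤ e * C1 / D * (iv ^ 2 * (10 * d * L ^ 2)) := by
          have hKinv : (((K : ℝ) - 1)⁻¹) ^ 2 * ((K : ℝ) - 1) ^ 2 = 1 := by
            field_simp
          have hcd : ((d - 1 : ℕ) : ℝ) = (d : ℝ) - 1 := by push_cast [hd1]; ring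
          have hinner : C1 * (8 * L ^ 2) + 2 * (((K : ℝ) - 1)⁻¹) ^ 2 *
              (C1 * ((d - 1 : ℕ) : ℝ) * ((K : ℝ) - 1) ^ 2 * L ^ 2) ≤ C1 * (10 * d * L ^ 2) := by
            have h1 : 2 * (((K : ℝ) - 1)⁻¹) ^ 2 *
                (C1 * ((d - 1 : ℕ) : ℝ) * ((K : ℝ) - 1) ^ 2 * L ^ 2)
                = 2 * C1 * ((d : ℝ) - 1) * L ^ 2 := by
              rw [hcd]
              field_simp
            rw [h1]
            have hCL : (0:ℝ) ≤ C1 * L ^ 2 := mul_nonneg (le_of_lt hC1pos) (sq_nonneg L)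
            have h2 : C1 * L ^ 2 * (6 + 2 * (d:ℝ)) ≤ C1 * L ^ 2 * (10 * (d:ℝ)) :=
              mul_le_mul_of_nonneg_left (by linarith) hCL
            linarith [h2]
          calc e / D * (iv ^ 2 * (C1 * (8 * L ^ 2) + 2 * (((K : ℝ) - 1)⁻¹) ^ 2 *
                (C1 * ((d - 1 : ℕ) : ℝ) * ((K : ℝ) - 1) ^ 2 * L ^ 2)))
              ≤ e / D * (iv ^ 2 * (C1 * (10 * d * L ^ 2))) := by
                apply mul_le_mul_of_nonneg_left _ (le_of_lt (div_pos he0 hD0))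
                exact mul_le_mul_of_nonneg_left hinner (sq_nonneg iv)
            _ = e * C1 / D * (iv ^ 2 * (10 * d * L ^ 2)) := by ring
  have key2 : ∑ A ∈ (powersetCard d (univ : Finset (Fin K))).filter (fun A => ¬ y ∈ A),
      dSubsetProb ε K d y A *
        ‖iv • ∑ k : Fin K, ((if k ∈ A then (1:ℝ) else 0) - zt) • v k‖ ^ 2
      ≤ C2 / D * (iv ^ 2 * (10 * d * L ^ 2)) := by
    rw [filter_not_mem_powersetCard]
    have hstep : ∀ A ∈ ((univ : Finset (Fin K)).erase y).powersetCard d,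
        dSubsetProb ε K d y A *
          ‖iv • ∑ k : Fin K, ((if k ∈ A then (1:ℝ) else 0) - zt) • v k‖ ^ 2
        ≤ 1 / D * (iv ^ 2 * (8 * L ^ 2 + 2 * (((K : ℝ) - 1)⁻¹) ^ 2 *
            ‖((K : ℝ) - 1) • (∑ k ∈ A, v k) - (d : ℝ) • T'‖ ^ 2)) := by
      intro A hA
      obtain ⟨hAs, hAc⟩ := mem_powersetCard.1 hA
      have hyA : y ∉ A := (subset_erase.1 hAs).2
      have herase : A.erase y = A := erase_eq_of_notMem hyA
      have hprob : dSubsetProb ε K d y A = 1 / D := by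
        rw [dSubsetProb, if_pos hAc, if_neg hyA]
      rw [hprob, Xdecomp y A zt v, herase,
        norm_smul, Real.norm_eq_abs, abs_of_pos hiv0, mul_pow]
      apply mul_le_mul_of_nonneg_left _ (by positivity : (0:ℝ) ≤ 1 / D)
      apply mul_le_mul_of_nonneg_left _ (sq_nonneg iv)
      have hu : |(if y ∈ A then (1:ℝ) else 0) - zt| ≤ 1 := by
        rw [if_neg hyA, abs_le]
        constructor <;> linarith
      have hw : |((A.erase y).card : ℝ) - ((K : ℝ) - 1) * zt| ≤ 1 := by
        rw [herase, hAc, hztK, abs_le]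
        constructor <;> linarith
      have h := Hpt A _ hu hw
      rw [herase, hAc] at h
      exact h
    calc ∑ A ∈ ((univ : Finset (Fin K)).erase y).powersetCard d,
        dSubsetProb ε K d y A *
          ‖iv • ∑ k : Fin K, ((if k ∈ A then (1:ℝ) else 0) - zt) • v k‖ ^ 2
        ≤ ∑ A ∈ ((univ : Finset (Fin K)).erase y).powersetCard d,
          1 / D * (iv ^ 2 * (8 * L ^ 2 + 2 * (((K : ℝ) - 1)⁻¹) ^ 2 *
            ‖((K : ℝ) - 1) • (∑ k ∈ A, v k) - (d : ℝ) • T'‖ ^ 2)) := sum_le_sum hstep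
      _ = 1 / D * (iv ^ 2 * (C2 * (8 * L ^ 2) + 2 * (((K : ℝ) - 1)⁻¹) ^ 2 *
            ∑ A ∈ ((univ : Finset (Fin K)).erase y).powersetCard d,
              ‖((K : ℝ) - 1) • (∑ k ∈ A, v k) - (d : ℝ) • T'‖ ^ 2)) := by
          rw [← mul_sum, ← mul_sum, sum_add_distrib, sum_const, card_powersetCard, hcardE,
            nsmul_eq_mul, ← mul_sum]
      _ ≤ 1 / D * (iv ^ 2 * (C2 * (8 * L ^ 2) + 2 * (((K : ℝ) - 1)⁻¹) ^ 2 *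
            (C2 * (d : ℝ) * ((K : ℝ) - 1) ^ 2 * L ^ 2))) := by
          apply mul_le_mul_of_nonneg_left _ (by positivity : (0:ℝ) ≤ 1 / D)
          apply mul_le_mul_of_nonneg_left _ (sq_nonneg iv)
          apply add_le_add le_rfl
          exact mul_le_mul_of_nonneg_left (Hvar d hdK) (by positivity)
      _ ≤ C2 / D * (iv ^ 2 * (10 * d * L ^ 2)) := by
          have hinner : C2 * (8 * L ^ 2) + 2 * (((K : ℝ) - 1)⁻¹) ^ 2 *
              (C2 * (d : ℝ) * ((K : ℝ) - 1) ^ 2 * L ^ 2) ≤ C2 * (10 * d * L ^ 2) := by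
            have h1 : 2 * (((K : ℝ) - 1)⁻¹) ^ 2 *
                (C2 * (d : ℝ) * ((K : ℝ) - 1) ^ 2 * L ^ 2)
                = 2 * C2 * (d : ℝ) * L ^ 2 := by
              field_simp
            rw [h1]
            have hCL : (0:ℝ) ≤ C2 * L ^ 2 := mul_nonneg (le_of_lt hC2pos) (sq_nonneg L)
            have h2 : C2 * L ^ 2 * (8 + 2 * (d:ℝ)) ≤ C2 * L ^ 2 * (10 * (d:ℝ)) :=
              mul_le_mul_of_nonneg_left (by linarith) hCL
            linarith [h2]
          calc 1 / D * (iv ^ 2 * (C2 * (8 * L ^ 2) + 2 * (((K : ℝ) - 1)⁻¹) ^ 2 *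
                (C2 * (d : ℝ) * ((K : ℝ) - 1) ^ 2 * L ^ 2)))
              ≤ 1 / D * (iv ^ 2 * (C2 * (10 * d * L ^ 2))) := by
                apply mul_le_mul_of_nonneg_left _ (by positivity : (0:ℝ) ≤ 1 / D)
                exact mul_le_mul_of_nonneg_left hinner (sq_nonneg iv)
            _ = C2 / D * (iv ^ 2 * (10 * d * L ^ 2)) := by ring
  -- final numeric bound
  have hden_le : den ≤ 3 / 2 * ((K : ℝ) + e) := by
    have h1 : (d : ℝ) * e ≤ (K : ℝ) / 2 + e := by
      have h2 := mul_le_mul_of_nonneg_right hdhi (le_of_lt he0)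
      have h3 : ((K : ℝ) / (2 * e) + 1) * e = (K : ℝ) / 2 + e := by
        field_simp
      linarith [h3 ▸ h2]
    have h4 : (0 : ℝ) ≤ d := by linarith
    rw [hden]; linarith
  have hKd2 : (K : ℝ) - 1 ≤ 2 * ((K : ℝ) - d) := by
    have h1 : ((2 * d : ℕ) : ℝ) ≤ ((K + 1 : ℕ) : ℝ) := by exact_mod_cast h2d
    push_cast at h1
    linarith
  have hlow : (d : ℝ) * (e - 1) / (3 * ((K : ℝ) + e)) ≤ gm - zt := by
    rw [hdiff, div_le_div_iff₀ (by positivity) (by positivity)]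
    have hKd1 : (1 : ℝ) ≤ (K : ℝ) - d := by linarith
    have hstep : ((K : ℝ) - 1) * den ≤ 3 * ((K : ℝ) - d) * ((K : ℝ) + e) := by
      calc ((K : ℝ) - 1) * den ≤ 2 * ((K : ℝ) - d) * den :=
            mul_le_mul_of_nonneg_right hKd2 (le_of_lt hden0)
        _ ≤ 2 * ((K : ℝ) - d) * (3 / 2 * ((K : ℝ) + e)) :=
            mul_le_mul_of_nonneg_left hden_le (by linarith)
        _ = 3 * ((K : ℝ) - d) * ((K : ℝ) + e) := by ring
    have hP : (0 : ℝ) ≤ (d : ℝ) * (e - 1) := by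
      apply mul_nonneg (by linarith) (by linarith)
    linarith [mul_le_mul_of_nonneg_left hstep hP]
  have hup : iv ≤ 3 * ((K : ℝ) + e) / ((d : ℝ) * (e - 1)) := by
    rw [hiv]
    have hpos : 0 < (d : ℝ) * (e - 1) / (3 * ((K : ℝ) + e)) := by
      apply div_pos _ (by positivity)
      apply mul_pos (by linarith) (by linarith)
    calc 1 / (gm - zt) ≤ 1 / ((d : ℝ) * (e - 1) / (3 * ((K : ℝ) + e))) :=
          one_div_le_one_div_of_le hpos hlow
      _ = 3 * ((K : ℝ) + e) / ((d : ℝ) * (e - 1)) := one_div_div _ _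
  have hup2 : iv ^ 2 ≤ (3 * ((K : ℝ) + e)) ^ 2 / ((d : ℝ) * (e - 1)) ^ 2 := by
    rw [← div_pow]
    exact pow_le_pow_left₀ (le_of_lt hiv0) hup 2
  have h4ed : (K : ℝ) + e ≤ 4 * e * d := by
    have h1 : (K : ℝ) ≤ d * (2 * e) := by
      rw [div_le_iff₀ (by positivity)] at hdlo
      exact hdlo
    linarith
  have hfinal : iv ^ 2 * (10 * d * L ^ 2) ≤ 360 * e * (e + (K : ℝ)) * L ^ 2 / (e - 1) ^ 2 := by
    have hde1 : (0 : ℝ) < (d : ℝ) * (e - 1) := by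
      apply mul_pos (by linarith) (by linarith)
    calc iv ^ 2 * (10 * d * L ^ 2)
        ≤ (3 * ((K : ℝ) + e)) ^ 2 / ((d : ℝ) * (e - 1)) ^ 2 * (10 * d * L ^ 2) := by
          apply mul_le_mul_of_nonneg_right hup2 (by positivity)
      _ ≤ 360 * e * (e + (K : ℝ)) * L ^ 2 / (e - 1) ^ 2 := by
          rw [div_mul_eq_mul_div,
            div_le_div_iff₀ (pow_pos hde1 2) (pow_pos (by linarith : (0:ℝ) < e - 1) 2)]
          have ht : (0:ℝ) ≤ (d:ℝ) * ((K:ℝ) + e) * L ^ 2 * (e - 1) ^ 2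
              * (4 * e * d - ((K:ℝ) + e)) :=
            mul_nonneg (mul_nonneg (mul_nonneg (mul_nonneg
              (by linarith : (0:ℝ) ≤ (d:ℝ)) (by linarith : (0:ℝ) ≤ (K:ℝ) + e))
              (sq_nonneg L)) (sq_nonneg (e - 1))) (by linarith)
          linarith [ht]
  -- assemble
  rw [← Finset.sum_subset (subset_univ (powersetCard d (univ : Finset (Fin K)))) hzero,
    ← sum_filter_add_sum_filter_not (powersetCard d (univ : Finset (Fin K))) (fun A => y ∈ A)]
  calc (∑ A ∈ (powersetCard d (univ : Finset (Fin K))).filter (fun A => y ∈ A),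
        dSubsetProb ε K d y A *
          ‖iv • ∑ k : Fin K, ((if k ∈ A then (1:ℝ) else 0) - zt) • v k‖ ^ 2)
      + ∑ A ∈ (powersetCard d (univ : Finset (Fin K))).filter (fun A => ¬ y ∈ A),
        dSubsetProb ε K d y A *
          ‖iv • ∑ k : Fin K, ((if k ∈ A then (1:ℝ) else 0) - zt) • v k‖ ^ 2
      ≤ e * C1 / D * (iv ^ 2 * (10 * d * L ^ 2)) + C2 / D * (iv ^ 2 * (10 * d * L ^ 2)) :=
        add_le_add key1 key2
    _ = (e * C1 + C2) / D * (iv ^ 2 * (10 * d * L ^ 2)) := by ring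
    _ = iv ^ 2 * (10 * d * L ^ 2) := by
        rw [← hD, div_self (ne_of_gt hD0), one_mul]
    _ ≤ 360 * e * (e + (K : ℝ)) * L ^ 2 / (e - 1) ^ 2 := hfinal
end
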